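/- arXiv:1211.0183 — 5 statements merged into one kernel-verified Lean document; each statement's English description precedes it below -/
import Mathlib

section
/- Let ρ_i be a density matrix, V a unitary, H_f a Hermitian matrix, β_f > 0, and ρ_f = e^{−β_f H_f}/Z_f the Gibbs state of H_f. Then S(ρ_f) − S(ρ_i) ≥ β_f · tr[(ρ_f − V ρ_i V†) H_f] (Clausius inequality for a DUT+DTT process). -/
open Matrix BigOperators ComplexOrder

set_option linter.unusedSectionVars false

/-- Apply a real function to a Hermitian matrix via the spectral theorem
(junk value `0` for non-Hermitian input). -/
noncomputable def matFun {n : Type*} [Fintype n] [DecidableEq n]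
    (f : ℝ → ℝ) (A : Matrix n n ℂ) : Matrix n n ℂ :=
  if hA : A.IsHermitian then
    (hA.eigenvectorUnitary : Matrix n n ℂ) *
      Matrix.diagonal (fun i => (f (hA.eigenvalues i) : ℂ)) *
      star (hA.eigenvectorUnitary : Matrix n n ℂ)
  else 0

/-- Matrix logarithm of a Hermitian matrix. -/
noncomputable def matLog {n : Type*} [Fintype n] [DecidableEq n]
    (A : Matrix n n ℂ) : Matrix n n ℂ := matFun Real.log A

/-- Matrix exponential of a Hermitian matrix. -/
noncomputable def matExp {n : Type*} [Fintype n] [DecidableEq n]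
    (A : Matrix n n ℂ) : Matrix n n ℂ := matFun Real.exp A

/-- The Gibbs state `e^{-βH}/tr[e^{-βH}]`. -/
noncomputable def gibbs {n : Type*} [Fintype n] [DecidableEq n]
    (β : ℝ) (H : Matrix n n ℂ) : Matrix n n ℂ :=
  (matExp ((-β) • H)).trace⁻¹ • matExp ((-β) • H)

/-- A density matrix: positive semidefinite with unit trace. -/
def IsDensity {n : Type*} [Fintype n] [DecidableEq n] (ρ : Matrix n n ℂ) : Prop :=
  ρ.PosSemidef ∧ ρ.trace = 1

/-- von Neumann entropy `S(ρ) = -tr[ρ ln ρ]`. -/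
noncomputable def vnEntropy {n : Type*} [Fintype n] [DecidableEq n]
    (ρ : Matrix n n ℂ) : ℝ := -((ρ * matLog ρ).trace.re)

/-- Relative entropy `S(ρ‖σ) = tr[ρ ln ρ] - tr[ρ ln σ]`. -/
noncomputable def relEnt {n : Type*} [Fintype n] [DecidableEq n]
    (ρ σ : Matrix n n ℂ) : ℝ :=
  ((ρ * matLog ρ).trace - (ρ * matLog σ).trace).re

namespace ClausiusAux

variable {n : Type*} [Fintype n] [DecidableEq n]

/-- real diagonal matrix over ℂ -/
noncomputable def dg (d : n → ℝ) : Matrix n n ℂ :=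
  Matrix.diagonal fun i => (d i : ℂ)

lemma dg_herm (d : n → ℝ) : (dg d).IsHermitian := by
  refine Matrix.isHermitian_diagonal_of_self_adjoint _ ?_
  ext i
  simp [Pi.star_apply, Complex.conj_ofReal]

lemma conj_herm {U : Matrix n n ℂ} (d : n → ℝ) :
    (U * dg d * Uᴴ).IsHermitian := by
  have hd := dg_herm (n := n) d
  rw [Matrix.IsHermitian] at hd ⊢
  rw [Matrix.conjTranspose_mul, Matrix.conjTranspose_mul, Matrix.conjTranspose_conjTranspose,
    hd, Matrix.mul_assoc]

lemma cancel_left {A B : Matrix n n ℂ} (hAB : A * B = 1) (x : Matrix n n ℂ) :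
    A * (B * x) = x := by
  rw [← Matrix.mul_assoc, hAB, Matrix.one_mul]

lemma key_comm (f : ℝ → ℝ) {U W : Matrix n n ℂ} {d e : n → ℝ}
    (hU : U ∈ Matrix.unitaryGroup n ℂ) (hW : W ∈ Matrix.unitaryGroup n ℂ)
    (h : U * dg d * Uᴴ = W * dg e * Wᴴ) :
    U * dg (fun i => f (d i)) * Uᴴ = W * dg (fun i => f (e i)) * Wᴴ := by
  have hU1 : U * Uᴴ = 1 := by
    have := Matrix.mem_unitaryGroup_iff.mp hU
    rwa [Matrix.star_eq_conjTranspose] at this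
  have hU2 : Uᴴ * U = 1 := by
    have := Matrix.mem_unitaryGroup_iff'.mp hU
    rwa [Matrix.star_eq_conjTranspose] at this
  have hW1 : W * Wᴴ = 1 := by
    have := Matrix.mem_unitaryGroup_iff.mp hW
    rwa [Matrix.star_eq_conjTranspose] at this
  have hW2 : Wᴴ * W = 1 := by
    have := Matrix.mem_unitaryGroup_iff'.mp hW
    rwa [Matrix.star_eq_conjTranspose] at this
  set M : Matrix n n ℂ := Wᴴ * U with hM
  have hcomm : M * dg d = dg e * M := by
    have h' := congrArg (fun X => Wᴴ * X * U) h
    rw [hM]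
    simp only [Matrix.mul_assoc] at h' ⊢
    rw [cancel_left hW2] at h'
    simp only [hU2, Matrix.mul_one] at h'
    exact h'
  have hentry : ∀ i j, M i j * (f (d j) : ℂ) = (f (e i) : ℂ) * M i j := by
    intro i j
    have h' := congrFun (congrFun hcomm i) j
    rw [show (M * dg d) i j = M i j * (d j : ℂ) by
        simp [dg, Matrix.mul_diagonal],
      show (dg e * M) i j = (e i : ℂ) * M i j by
        simp [dg, Matrix.diagonal_mul]] at h'
    by_cases hMij : M i j = 0
    · simp [hMij]
    · have hde : (d j : ℂ) = (e i : ℂ) := by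
        rw [mul_comm] at h'
        exact mul_right_cancel₀ hMij h'
      have hde' : d j = e i := by exact_mod_cast hde
      rw [hde', mul_comm]
  have hcomm2 : M * dg (fun i => f (d i)) = dg (fun i => f (e i)) * M := by
    funext i j
    rw [show (M * dg fun i => f (d i)) i j = M i j * (f (d j) : ℂ) by
        simp [dg, Matrix.mul_diagonal],
      show ((dg fun i => f (e i)) * M) i j = (f (e i) : ℂ) * M i j by
        simp [dg, Matrix.diagonal_mul]]
    exact hentry i j
  have hUeq : U = W * M := by
    rw [hM, ← Matrix.mul_assoc, hW1, Matrix.one_mul]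
  have hMMH : M * Mᴴ = 1 := by
    rw [hM, Matrix.conjTranspose_mul, Matrix.conjTranspose_conjTranspose]
    simp only [Matrix.mul_assoc]
    rw [cancel_left hU1, hW2]
  calc U * dg (fun i => f (d i)) * Uᴴ
      = W * (M * dg (fun i => f (d i)) * Mᴴ) * Wᴴ := by
        rw [hUeq, Matrix.conjTranspose_mul]
        simp only [Matrix.mul_assoc]
    _ = W * (dg (fun i => f (e i)) * (M * Mᴴ)) * Wᴴ := by
        rw [hcomm2]
        simp only [Matrix.mul_assoc]
    _ = W * dg (fun i => f (e i)) * Wᴴ := by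
        rw [hMMH, Matrix.mul_one, Matrix.mul_assoc]

lemma matFun_conj (f : ℝ → ℝ) {U : Matrix n n ℂ} (hU : U ∈ Matrix.unitaryGroup n ℂ)
    (d : n → ℝ) :
    matFun f (U * dg d * Uᴴ) = U * dg (fun i => f (d i)) * Uᴴ := by
  have hA : (U * dg d * Uᴴ).IsHermitian := conj_herm d
  rw [matFun, dif_pos hA]
  have hspec := hA.spectral_theorem
  have hEU : ((hA.eigenvectorUnitary : Matrix n n ℂ)) ∈ Matrix.unitaryGroup n ℂ :=
    hA.eigenvectorUnitary.2
  have hdiag : (hA.eigenvectorUnitary : Matrix n n ℂ) * dg hA.eigenvalues *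
      (hA.eigenvectorUnitary : Matrix n n ℂ)ᴴ = U * dg d * Uᴴ := by
    conv_rhs => rw [hspec]
    have hdg : dg hA.eigenvalues = Matrix.diagonal (RCLike.ofReal ∘ hA.eigenvalues) := by
      funext i j
      simp [dg, Matrix.diagonal, Function.comp]
    rw [hdg]
    rfl
  have hk := key_comm f hEU hU hdiag
  rw [← hk, Matrix.star_eq_conjTranspose]
  rfl

lemma trace_conj {U : Matrix n n ℂ} (hU : U ∈ Matrix.unitaryGroup n ℂ) (d : n → ℝ) :
    (U * dg d * Uᴴ).trace = ((∑ i, d i : ℝ) : ℂ) := by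
  have hU2 : Uᴴ * U = 1 := by
    have := Matrix.mem_unitaryGroup_iff'.mp hU
    rwa [Matrix.star_eq_conjTranspose] at this
  rw [Matrix.trace_mul_comm, ← Matrix.mul_assoc, hU2, Matrix.one_mul]
  simp [dg, Matrix.trace_diagonal]

lemma conj_mul_conj {U : Matrix n n ℂ} (hU : U ∈ Matrix.unitaryGroup n ℂ) (a b : n → ℝ) :
    (U * dg a * Uᴴ) * (U * dg b * Uᴴ) = U * dg (fun i => a i * b i) * Uᴴ := by
  have hU2 : Uᴴ * U = 1 := by
    have := Matrix.mem_unitaryGroup_iff'.mp hU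
    rwa [Matrix.star_eq_conjTranspose] at this
  simp only [Matrix.mul_assoc]
  rw [cancel_left hU2 (dg b * Uᴴ), ← Matrix.mul_assoc (dg a) (dg b) Uᴴ]
  congr 2
  simp [dg, Matrix.diagonal_mul_diagonal]

lemma trace_conj_mul_conj {U W : Matrix n n ℂ}
    (hU : U ∈ Matrix.unitaryGroup n ℂ) (hW : W ∈ Matrix.unitaryGroup n ℂ) (p c : n → ℝ) :
    ((U * dg p * Uᴴ) * (W * dg c * Wᴴ)).trace =
      ((∑ i, ∑ j, p i * c j * Complex.normSq ((Uᴴ * W) i j) : ℝ) : ℂ) := by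
  set M : Matrix n n ℂ := Uᴴ * W with hM
  have hU1 : U * Uᴴ = 1 := by
    have := Matrix.mem_unitaryGroup_iff.mp hU
    rwa [Matrix.star_eq_conjTranspose] at this
  have hU2 : Uᴴ * U = 1 := by
    have := Matrix.mem_unitaryGroup_iff'.mp hU
    rwa [Matrix.star_eq_conjTranspose] at this
  have h1 : (U * dg p * Uᴴ) * (W * dg c * Wᴴ) = U * (dg p * M * dg c * Mᴴ) * Uᴴ := by
    rw [hM, Matrix.conjTranspose_mul, Matrix.conjTranspose_conjTranspose]
    simp only [Matrix.mul_assoc]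
    rw [hU1, Matrix.mul_one]
  rw [h1, Matrix.trace_mul_comm, ← Matrix.mul_assoc, hU2, Matrix.one_mul]
  rw [Matrix.trace]
  push_cast
  refine Finset.sum_congr rfl fun i _ => ?_
  rw [Matrix.diag_apply]
  have h2 : (dg p * M * dg c * Mᴴ) i i = ∑ j, (p i : ℂ) * M i j * (c j : ℂ) * star (M i j) := by
    rw [Matrix.mul_apply]
    refine Finset.sum_congr rfl fun j _ => ?_
    have h3 : (dg p * M * dg c) i j = (p i : ℂ) * M i j * (c j : ℂ) := by
      simp only [dg, Matrix.mul_diagonal, Matrix.diagonal_mul]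
    rw [h3, Matrix.conjTranspose_apply]
  rw [h2]
  refine Finset.sum_congr rfl fun j _ => ?_
  rw [show (star (M i j)) = (starRingEnd ℂ) (M i j) from rfl]
  rw [mul_comm ((p i : ℂ) * M i j) (c j : ℂ), mul_assoc, mul_assoc]
  rw [show M i j * ((starRingEnd ℂ) (M i j)) = (Complex.normSq (M i j) : ℂ) by
    rw [Complex.mul_conj]]
  push_cast
  ring

lemma scalar_klein {x y : ℝ} (hx : 0 ≤ x) (hy : 0 < y) :
    x - y ≤ x * Real.log x - x * Real.log y := by
  rcases eq_or_lt_of_le hx with h | h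
  · simp only [← h, zero_mul, sub_zero, zero_sub, sub_self]
    linarith
  · have h1 : Real.log (y / x) ≤ y / x - 1 := Real.log_le_sub_one_of_pos (by positivity)
    have h2 : Real.log (y / x) = Real.log y - Real.log x := Real.log_div hy.ne' h.ne'
    have h3 : x * (y / x) = y := by field_simp
    nlinarith


lemma spectral_dg {A : Matrix n n ℂ} (hA : A.IsHermitian) :
    A = (hA.eigenvectorUnitary : Matrix n n ℂ) * dg hA.eigenvalues *
      (hA.eigenvectorUnitary : Matrix n n ℂ)ᴴ := by
  conv_lhs => rw [hA.spectral_theorem]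
  have hdg : dg hA.eigenvalues = Matrix.diagonal (RCLike.ofReal ∘ hA.eigenvalues) := by
    funext i j
    simp [dg, Matrix.diagonal, Function.comp]
  rw [hdg]
  rfl

lemma smul_dg (r : ℝ) (d : n → ℝ) : r • (dg d : Matrix n n ℂ) = dg (fun i => r * d i) := by
  funext i j
  by_cases hij : i = j
  · subst hij
    simp [dg, Matrix.diagonal_apply, Matrix.smul_apply, Complex.real_smul]
  · simp [dg, Matrix.diagonal_apply_ne _ hij, Matrix.smul_apply]


lemma smul_c (r : ℝ) {U : Matrix n n ℂ} (d : n → ℝ) :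
    ((r : ℂ)) • (U * dg d * Uᴴ) = U * dg (fun i => r * d i) * Uᴴ := by
  rw [← Matrix.smul_mul, ← Matrix.mul_smul]
  congr 2
  funext i j
  by_cases hij : i = j
  · subst hij
    simp [dg, Matrix.diagonal_apply_eq, Matrix.smul_apply, smul_eq_mul]
  · simp [dg, Matrix.diagonal_apply_ne _ hij, Matrix.smul_apply]

end ClausiusAux

open ClausiusAux

/-- Clausius inequality for a DUT+DTT process. -/
theorem clausius_DUT_DTT {n : Type*} [Fintype n] [DecidableEq n]
    (ρi : Matrix n n ℂ) (hi : IsDensity ρi) (V : Matrix.unitaryGroup n ℂ)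
    (Hf : Matrix n n ℂ) (hHf : Hf.IsHermitian) (βf : ℝ) (hβf : 0 < βf)
    (ρf : Matrix n n ℂ) (hf : ρf = gibbs βf Hf) :
    vnEntropy ρf - vnEntropy ρi ≥
      βf * (((ρf - (V : Matrix n n ℂ) * ρi * star (V : Matrix n n ℂ)) * Hf).trace.re) := by
  rcases isEmpty_or_nonempty n with hE | hNE
  · have hz : ∀ A : Matrix n n ℂ, A.trace = 0 := fun A => by simp [Matrix.trace]
    simp only [vnEntropy, hz, Complex.zero_re, neg_zero, sub_zero, mul_zero]
    try norm_num
  obtain ⟨hpsd, htr⟩ := hi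
  have hρiH : ρi.IsHermitian := hpsd.1
  set Ui : Matrix n n ℂ := (hρiH.eigenvectorUnitary : Matrix n n ℂ) with hUidef
  have hUiU : Ui ∈ Matrix.unitaryGroup n ℂ := hρiH.eigenvectorUnitary.2
  set p : n → ℝ := hρiH.eigenvalues with hpdef
  have hρi : ρi = Ui * dg p * Uiᴴ := spectral_dg hρiH
  have hp0 : ∀ i, 0 ≤ p i := fun i => hpsd.eigenvalues_nonneg i
  have hpsum : ∑ i, p i = 1 := by
    have h1 : ρi.trace = ((∑ i, p i : ℝ) : ℂ) := by rw [hρi]; exact trace_conj hUiU p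
    rw [htr] at h1
    exact_mod_cast h1.symm
  set Uh : Matrix n n ℂ := (hHf.eigenvectorUnitary : Matrix n n ℂ) with hUhdef
  have hUhU : Uh ∈ Matrix.unitaryGroup n ℂ := hHf.eigenvectorUnitary.2
  set h : n → ℝ := hHf.eigenvalues with hhdef
  have hHfd : Hf = Uh * dg h * Uhᴴ := spectral_dg hHf
  -- the Gibbs state
  have hAd : (-βf) • Hf = Uh * dg (fun i => -βf * h i) * Uhᴴ := by
    rw [hHfd, ← Matrix.smul_mul, ← Matrix.mul_smul, smul_dg]
  have hexp : matExp ((-βf) • Hf) = Uh * dg (fun i => Real.exp (-βf * h i)) * Uhᴴ := by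
    rw [hAd, matExp]
    exact matFun_conj Real.exp hUhU _
  set Z : ℝ := ∑ i, Real.exp (-βf * h i) with hZdef
  have hZpos : 0 < Z := Finset.sum_pos (fun i _ => Real.exp_pos _) Finset.univ_nonempty
  have htrZ : (matExp ((-βf) • Hf)).trace = (Z : ℂ) := by
    rw [hexp]
    exact trace_conj hUhU _
  set g : n → ℝ := fun i => Z⁻¹ * Real.exp (-βf * h i) with hgdef
  have hg0 : ∀ i, 0 < g i := fun i => by
    have := Real.exp_pos (-βf * h i)
    exact mul_pos (inv_pos.mpr hZpos) this
  have hgsum : ∑ i, g i = 1 := by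
    rw [hgdef]
    rw [← Finset.mul_sum, ← hZdef, inv_mul_cancel₀ hZpos.ne']
  have hρf : ρf = Uh * dg g * Uhᴴ := by
    rw [hf, gibbs, htrZ, hexp,
      show ((Z : ℂ))⁻¹ = ((Z⁻¹ : ℝ) : ℂ) by push_cast; ring, smul_c]
  have hlogg : ∀ i, Real.log (g i) = -βf * h i - Real.log Z := by
    intro i
    rw [hgdef]
    rw [Real.log_mul (inv_ne_zero hZpos.ne') (Real.exp_ne_zero _), Real.log_inv,
      Real.log_exp]
    ring
  -- entropies
  have hlogρf : matLog ρf = Uh * dg (fun i => Real.log (g i)) * Uhᴴ := by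
    rw [hρf, matLog]
    exact matFun_conj Real.log hUhU _
  have hSf : vnEntropy ρf = -(∑ i, g i * Real.log (g i)) := by
    rw [vnEntropy, hlogρf, hρf, conj_mul_conj hUhU, trace_conj hUhU]
    simp
  have hlogρi : matLog ρi = Ui * dg (fun i => Real.log (p i)) * Uiᴴ := by
    rw [hρi, matLog]
    exact matFun_conj Real.log hUiU _
  have hSi : vnEntropy ρi = -(∑ i, p i * Real.log (p i)) := by
    rw [vnEntropy, hlogρi, hρi, conj_mul_conj hUiU, trace_conj hUiU]
    simp
  -- rotated initial state
  set W : Matrix n n ℂ := (V : Matrix n n ℂ) * Ui with hWdef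
  have hWU : W ∈ Matrix.unitaryGroup n ℂ := mul_mem V.2 hUiU
  have hρ' : (V : Matrix n n ℂ) * ρi * star (V : Matrix n n ℂ) = W * dg p * Wᴴ := by
    rw [hρi, hWdef, Matrix.star_eq_conjTranspose, Matrix.conjTranspose_mul]
    simp only [Matrix.mul_assoc]
  -- traces against Hf
  have hT1 : ((ρf * Hf).trace) = ((∑ i, g i * h i : ℝ) : ℂ) := by
    rw [hρf, hHfd, conj_mul_conj hUhU, trace_conj hUhU]
  set M : Matrix n n ℂ := Wᴴ * Uh with hMdef
  set m : n → n → ℝ := fun i j => Complex.normSq (M i j) with hmdef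
  have hT2 : (((W * dg p * Wᴴ) * Hf).trace) =
      ((∑ i, ∑ j, p i * h j * m i j : ℝ) : ℂ) := by
    rw [hHfd]
    exact trace_conj_mul_conj hWU hUhU p h
  have hm0 : ∀ i j, 0 ≤ m i j := fun i j => Complex.normSq_nonneg _
  have hMU : M ∈ Matrix.unitaryGroup n ℂ := by
    rw [hMdef, ← Matrix.star_eq_conjTranspose]
    exact mul_mem (Unitary.star_mem hWU) hUhU
  have hrow : ∀ i, ∑ j, m i j = 1 := by
    intro i
    have h1 : (M * Mᴴ) i i = 1 := by
      have := Matrix.mem_unitaryGroup_iff.mp hMU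
      rw [Matrix.star_eq_conjTranspose] at this
      rw [this, Matrix.one_apply_eq]
    rw [Matrix.mul_apply] at h1
    have h2 : ∀ j, M i j * Mᴴ j i = ((m i j : ℝ) : ℂ) := fun j => by
      rw [Matrix.conjTranspose_apply, hmdef,
        show (star (M i j)) = (starRingEnd ℂ) (M i j) from rfl, Complex.mul_conj]
    rw [Finset.sum_congr rfl fun j _ => h2 j] at h1
    exact_mod_cast h1
  have hcol : ∀ j, ∑ i, m i j = 1 := by
    intro j
    have h1 : (Mᴴ * M) j j = 1 := by
      have := Matrix.mem_unitaryGroup_iff'.mp hMU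
      rw [Matrix.star_eq_conjTranspose] at this
      rw [this, Matrix.one_apply_eq]
    rw [Matrix.mul_apply] at h1
    have h2 : ∀ i, Mᴴ j i * M i j = ((m i j : ℝ) : ℂ) := fun i => by
      rw [Matrix.conjTranspose_apply, hmdef,
        show (star (M i j)) = (starRingEnd ℂ) (M i j) from rfl, mul_comm, Complex.mul_conj]
    rw [Finset.sum_congr rfl fun i _ => h2 i] at h1
    exact_mod_cast h1
  -- abbreviations for the real sums
  set S1 : ℝ := ∑ i, p i * Real.log (p i) with hS1def
  set S2 : ℝ := ∑ i, g i * Real.log (g i) with hS2def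
  set S3 : ℝ := ∑ i, g i * h i with hS3def
  set S4 : ℝ := ∑ i, ∑ j, p i * h j * m i j with hS4def
  -- the Klein-type inequality
  have hkey : 0 ≤ ∑ i, ∑ j,
      m i j * ((p i * Real.log (p i) - p i * Real.log (g j)) - (p i - g j)) := by
    refine Finset.sum_nonneg fun i _ => Finset.sum_nonneg fun j _ => ?_
    exact mul_nonneg (hm0 i j) (sub_nonneg.2 (scalar_klein (hp0 i) (hg0 j)))
  have hA1 : ∑ i, ∑ j, m i j * (p i * Real.log (p i)) = S1 := by
    rw [hS1def]
    refine Finset.sum_congr rfl fun i _ => ?_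
    rw [← Finset.sum_mul, hrow i, one_mul]
  have hA2 : ∑ i, ∑ j, m i j * (p i * Real.log (g j))
      = -βf * S4 - Real.log Z := by
    have e1 : ∀ i j, m i j * (p i * Real.log (g j))
        = -βf * (p i * h j * m i j) - Real.log Z * (m i j * p i) := by
      intro i j
      rw [hlogg j]
      ring
    rw [Finset.sum_congr rfl fun i _ => Finset.sum_congr rfl fun j _ => e1 i j]
    have e2 : ∑ i, ∑ j, (-βf * (p i * h j * m i j) - Real.log Z * (m i j * p i))
        = -βf * (∑ i, ∑ j, p i * h j * m i j) - Real.log Z * (∑ i, ∑ j, m i j * p i) := by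
      rw [Finset.mul_sum, Finset.mul_sum, ← Finset.sum_sub_distrib]
      refine Finset.sum_congr rfl fun i _ => ?_
      rw [Finset.mul_sum, Finset.mul_sum, ← Finset.sum_sub_distrib]
    rw [e2]
    have e3 : ∑ i, ∑ j, m i j * p i = 1 := by
      calc ∑ i, ∑ j, m i j * p i = ∑ i, p i :=
            Finset.sum_congr rfl fun i _ => by rw [← Finset.sum_mul, hrow i, one_mul]
        _ = 1 := hpsum
    rw [e3, mul_one, ← hS4def]
  have hA3 : ∑ i, ∑ j, m i j * p i = 1 := by
    calc ∑ i, ∑ j, m i j * p i = ∑ i, p i :=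
          Finset.sum_congr rfl fun i _ => by rw [← Finset.sum_mul, hrow i, one_mul]
      _ = 1 := hpsum
  have hA4 : ∑ i, ∑ j, m i j * g j = 1 := by
    rw [Finset.sum_comm]
    calc ∑ j, ∑ i, m i j * g j = ∑ j, g j :=
          Finset.sum_congr rfl fun j _ => by rw [← Finset.sum_mul, hcol j, one_mul]
      _ = 1 := hgsum
  have hkey2 : 0 ≤ S1 + βf * S4 + Real.log Z := by
    have hk := hkey
    simp only [mul_sub, Finset.sum_sub_distrib] at hk
    rw [hA1, hA2, hA3, hA4] at hk
    linarith
  have hS2eq : S2 = -βf * S3 - Real.log Z := by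
    rw [hS2def]
    calc ∑ i, g i * Real.log (g i)
        = ∑ i, (-βf * (g i * h i) - Real.log Z * g i) :=
          Finset.sum_congr rfl fun i _ => by rw [hlogg i]; ring
      _ = -βf * (∑ i, g i * h i) - Real.log Z * (∑ i, g i) := by
          rw [Finset.mul_sum, Finset.mul_sum, ← Finset.sum_sub_distrib]
      _ = -βf * S3 - Real.log Z := by rw [← hS3def, hgsum, mul_one]
  rw [hSf, hSi, hρ', Matrix.sub_mul, Matrix.trace_sub, hT1, hT2,
    Complex.sub_re, Complex.ofReal_re, Complex.ofReal_re]
  have hfin : -S2 - -S1 - βf * (S3 - S4) = S1 + βf * S4 + Real.log Z := by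
    rw [hS2eq]; ring
  linarith [hkey2]
end

section
/- For Gibbs configurations (ρ_i, H_i) at β_i and (ρ_f, H_f) at β_f on an N-dimensional Hilbert space, the minimum over unitaries V of the heat tr[(ρ_f − V ρ_i V†) H_f] equals Σ_k H_f(k)·(e^{−β_f H_f(k)}/Z_f − e^{−β_i H_i(N−k+1)}/Z_i), with eigenvalues ordered decreasingly. -/
open Matrix BigOperators ComplexOrder

section Auxiliary

set_option linter.unusedSectionVars false

variable {n : Type*} [Fintype n] [DecidableEq n]

/- ### permutation matrices -/

lemma permMatrix_apply' {m R : Type*} [DecidableEq m] [Zero R] [One R]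
    (σ : Equiv.Perm m) (i j : m) :
    σ.permMatrix R i j = if σ i = j then 1 else 0 := by
  simp [Equiv.Perm.permMatrix, PEquiv.toMatrix_apply, Equiv.toPEquiv_apply, Option.mem_def,
    eq_comm]

lemma star_permMatrix (σ : Equiv.Perm n) :
    star (σ.permMatrix ℂ) = (σ⁻¹).permMatrix ℂ := by
  ext i j
  rw [Matrix.star_apply, permMatrix_apply', permMatrix_apply', apply_ite star, star_one, star_zero]
  congr 1
  simp only [eq_iff_iff]
  constructor
  · rintro rfl; simp
  · rintro rfl; simp

lemma permMatrix_mul_star (σ : Equiv.Perm n) :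
    σ.permMatrix ℂ * star (σ.permMatrix ℂ) = 1 := by
  rw [star_permMatrix]
  ext i j
  simp only [mul_apply, permMatrix_apply', one_apply, ite_mul, one_mul, zero_mul,
    Finset.sum_ite_eq, Finset.mem_univ, if_true]
  by_cases h : i = j
  · subst h; simp
  · rw [if_neg, if_neg h]
    intro hh
    simp only [Equiv.Perm.inv_def, Equiv.symm_apply_apply] at hh
    exact absurd hh h

lemma permMatrix_conj_diag (σ : Equiv.Perm n) (d : n → ℂ) :
    σ.permMatrix ℂ * diagonal d * star (σ.permMatrix ℂ) = diagonal (d ∘ σ) := by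
  rw [star_permMatrix]
  show σ.toPEquiv.toMatrix * diagonal d * (σ⁻¹).toPEquiv.toMatrix = _
  rw [PEquiv.toMatrix_toPEquiv_mul, PEquiv.mul_toMatrix_toPEquiv]
  ext i j
  simp only [Equiv.Perm.inv_def, Equiv.symm_symm, submatrix_apply, diagonal_apply,
    Function.comp_apply, id_eq]
  by_cases h : i = j
  · subst h; simp
  · rw [if_neg (fun hh => h (by simpa using hh)), if_neg h]

/- ### well-definedness of the functional calculus -/

lemma unitary_cancel_left {W : Matrix n n ℂ} (hW2 : star W * W = 1) (X : Matrix n n ℂ) :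
    star W * (W * X) = X := by rw [← Matrix.mul_assoc, hW2, Matrix.one_mul]

lemma funcalc_welldef {W U : Matrix n n ℂ}
    (hW1 : W * star W = 1) (hW2 : star W * W = 1)
    (hU1 : U * star U = 1) (hU2 : star U * U = 1) (μ d : n → ℝ) (f : ℝ → ℝ)
    (h : W * diagonal (fun i => (μ i : ℂ)) * star W
       = U * diagonal (fun i => (d i : ℂ)) * star U) :
    W * diagonal (fun i => (f (μ i) : ℂ)) * star W
      = U * diagonal (fun i => (f (d i) : ℂ)) * star U := by
  set S : Matrix n n ℂ := star W * U with hSdef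
  have hU : U = W * S := by
    rw [hSdef, ← Matrix.mul_assoc, hW1, Matrix.one_mul]
  have hSs : S * star S = 1 := by
    rw [hSdef, Matrix.star_mul, star_star, Matrix.mul_assoc, ← Matrix.mul_assoc U, hU1,
      Matrix.one_mul, hW2]
  have hS : diagonal (fun i => (μ i : ℂ)) * S = S * diagonal (fun i => (d i : ℂ)) := by
    have h' := congrArg (fun M => star W * M * U) h
    simp only [Matrix.mul_assoc] at h'
    rw [unitary_cancel_left hW2, hU2, Matrix.mul_one] at h'
    rw [hSdef, Matrix.mul_assoc]
    exact h'
  have hkey : ∀ i j, (f (μ i) : ℂ) * S i j = S i j * (f (d j) : ℂ) := by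
    intro i j
    rcases eq_or_ne (S i j) 0 with h0 | h0
    · simp [h0]
    · have := congrFun (congrFun hS i) j
      rw [Matrix.diagonal_mul, Matrix.mul_diagonal] at this
      have hmd : (μ i : ℂ) = (d j : ℂ) := by
        have h2 : (μ i : ℂ) * S i j = (d j : ℂ) * S i j := by rw [this, mul_comm]
        exact mul_right_cancel₀ h0 h2
      have : μ i = d j := by exact_mod_cast hmd
      rw [this, mul_comm]
  have hS' : diagonal (fun i => (f (μ i) : ℂ)) * S = S * diagonal (fun i => (f (d i) : ℂ)) := by
    ext i j
    rw [Matrix.diagonal_mul, Matrix.mul_diagonal]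
    exact hkey i j
  rw [hU, Matrix.star_mul]
  symm
  calc W * S * diagonal (fun i => (f (d i) : ℂ)) * (star S * star W)
      = W * ((S * diagonal (fun i => (f (d i) : ℂ))) * star S) * star W := by
        simp only [Matrix.mul_assoc]
    _ = W * (diagonal (fun i => (f (μ i) : ℂ)) * (S * star S)) * star W := by
        rw [← hS']; simp only [Matrix.mul_assoc]
    _ = W * diagonal (fun i => (f (μ i) : ℂ)) * star W := by
        rw [hSs, Matrix.mul_one, Matrix.mul_assoc]

lemma conj_diag_isHermitian {U : Matrix n n ℂ} (d : n → ℝ) :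
    (U * diagonal (fun i => (d i : ℂ)) * star U).IsHermitian := by
  have : star (U * diagonal (fun i => (d i : ℂ)) * star U)
      = U * diagonal (fun i => (d i : ℂ)) * star U := by
    rw [Matrix.star_mul, Matrix.star_mul, star_star]
    rw [show star (diagonal (fun i => ((d i : ℝ) : ℂ))) = diagonal (fun i => ((d i : ℝ) : ℂ)) by
      ext i j
      rcases eq_or_ne i j with h | h
      · subst h; simp [Matrix.star_apply, Complex.conj_ofReal]
      · simp [Matrix.star_apply, Matrix.diagonal_apply_ne _ h,
          Matrix.diagonal_apply_ne _ (Ne.symm h)]]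
    rw [Matrix.mul_assoc]
  exact this

lemma matFun_conj (f : ℝ → ℝ) {U : Matrix n n ℂ} (hU1 : U * star U = 1) (hU2 : star U * U = 1)
    (d : n → ℝ) :
    matFun f (U * diagonal (fun i => (d i : ℂ)) * star U)
      = U * diagonal (fun i => (f (d i) : ℂ)) * star U := by
  have hA : (U * diagonal (fun i => (d i : ℂ)) * star U).IsHermitian := conj_diag_isHermitian d
  rw [matFun, dif_pos hA]
  have hmem := (hA.eigenvectorUnitary).2
  have hW1 : (hA.eigenvectorUnitary : Matrix n n ℂ)
      * star (hA.eigenvectorUnitary : Matrix n n ℂ) = 1 :=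
    Matrix.mem_unitaryGroup_iff.mp hmem
  have hW2 : star (hA.eigenvectorUnitary : Matrix n n ℂ)
      * (hA.eigenvectorUnitary : Matrix n n ℂ) = 1 :=
    Matrix.mem_unitaryGroup_iff'.mp hmem
  refine funcalc_welldef hW1 hW2 hU1 hU2 _ _ f ?_
  have := hA.spectral_theorem
  rw [Unitary.conjStarAlgAut_apply] at this
  exact this.symm

lemma trace_conj {U : Matrix n n ℂ} (hU2 : star U * U = 1) (D : Matrix n n ℂ) :
    (U * D * star U).trace = D.trace := by
  rw [Matrix.trace_mul_cycle, hU2, Matrix.one_mul]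

lemma real_smul_conj_diag (r : ℝ) (U : Matrix n n ℂ) (v : n → ℝ) :
    r • (U * diagonal (fun i => (v i : ℂ)) * star U)
      = U * diagonal (fun i => ((r * v i : ℝ) : ℂ)) * star U := by
  rw [show r • (U * diagonal (fun i => (v i : ℂ)) * star U)
      = U * (r • diagonal (fun i => (v i : ℂ))) * star U by
    rw [Matrix.mul_smul, Matrix.smul_mul]]
  congr 2
  ext i j
  rcases eq_or_ne i j with h | h
  · subst h; simp [Matrix.diagonal_apply_eq, Complex.real_smul]
  · simp [Matrix.smul_apply, Matrix.diagonal_apply_ne _ h]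

lemma complex_smul_conj_diag (r : ℝ) (U : Matrix n n ℂ) (v : n → ℝ) :
    ((r : ℂ)) • (U * diagonal (fun i => (v i : ℂ)) * star U)
      = U * diagonal (fun i => ((r * v i : ℝ) : ℂ)) * star U := by
  rw [show ((r : ℂ)) • (U * diagonal (fun i => (v i : ℂ)) * star U)
      = U * (((r : ℂ)) • diagonal (fun i => (v i : ℂ))) * star U by
    rw [Matrix.mul_smul, Matrix.smul_mul]]
  congr 2
  ext i j
  rcases eq_or_ne i j with h | h
  · subst h; simp [Matrix.diagonal_apply_eq]
  · simp [Matrix.smul_apply, Matrix.diagonal_apply_ne _ h]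

lemma gibbs_conj [Nonempty n] (β : ℝ) {U : Matrix n n ℂ}
    (hU1 : U * star U = 1) (hU2 : star U * U = 1) (α : n → ℝ) :
    gibbs β (U * diagonal (fun i => (α i : ℂ)) * star U)
      = U * diagonal (fun i =>
          ((Real.exp (-β * α i) / ∑ j, Real.exp (-β * α j) : ℝ) : ℂ)) * star U := by
  have hsmul : (-β) • (U * diagonal (fun i => (α i : ℂ)) * star U)
      = U * diagonal (fun i => ((-β * α i : ℝ) : ℂ)) * star U :=
    real_smul_conj_diag (-β) U α
  have hexp : matExp ((-β) • (U * diagonal (fun i => (α i : ℂ)) * star U))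
      = U * diagonal (fun i => ((Real.exp (-β * α i) : ℝ) : ℂ)) * star U := by
    rw [hsmul]; exact matFun_conj Real.exp hU1 hU2 _
  set Z : ℝ := ∑ j, Real.exp (-β * α j) with hZ
  have hZpos : 0 < Z := Finset.sum_pos (fun j _ => Real.exp_pos _) Finset.univ_nonempty
  have htr : (matExp ((-β) • (U * diagonal (fun i => (α i : ℂ)) * star U))).trace = (Z : ℂ) := by
    rw [hexp, trace_conj hU2, Matrix.trace_diagonal, hZ]
    exact (Complex.ofReal_sum _ _).symm
  rw [gibbs, htr, hexp, ← Complex.ofReal_inv, complex_smul_conj_diag]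
  have hfun : (fun i => ((Z⁻¹ * Real.exp (-β * α i) : ℝ) : ℂ))
      = fun i => ((Real.exp (-β * α i) / Z : ℝ) : ℂ) := by
    funext i; rw [inv_mul_eq_div]
  rw [hfun]

/- ### trace computations -/

lemma trace_conj_mul_conj_same {Q : Matrix n n ℂ} (hQ2 : star Q * Q = 1) (p a : n → ℝ) :
    ((Q * diagonal (fun i => (p i : ℂ)) * star Q)
      * (Q * diagonal (fun i => (a i : ℂ)) * star Q)).trace = ((∑ k, p k * a k : ℝ) : ℂ) := by
  have : (Q * diagonal (fun i => (p i : ℂ)) * star Q)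
      * (Q * diagonal (fun i => (a i : ℂ)) * star Q)
      = Q * (diagonal (fun i => (p i : ℂ)) * diagonal (fun i => (a i : ℂ))) * star Q := by
    calc (Q * diagonal (fun i => (p i : ℂ)) * star Q)
          * (Q * diagonal (fun i => (a i : ℂ)) * star Q)
        = Q * (diagonal (fun i => (p i : ℂ))
            * ((star Q * Q) * (diagonal (fun i => (a i : ℂ)) * star Q))) := by
          simp only [Matrix.mul_assoc]
      _ = _ := by rw [hQ2, Matrix.one_mul]; simp only [Matrix.mul_assoc]
  rw [this, trace_conj hQ2, Matrix.diagonal_mul_diagonal, Matrix.trace_diagonal,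
    Complex.ofReal_sum]
  push_cast
  rfl

lemma trace_conj_general (W : Matrix n n ℂ) (p a : n → ℝ) :
    ((W * diagonal (fun j => (p j : ℂ)) * star W) * diagonal (fun k => (a k : ℂ))).trace
      = ((∑ k, ∑ j, a k * p j * Complex.normSq (W k j) : ℝ) : ℂ) := by
  rw [Matrix.trace]
  push_cast
  refine Finset.sum_congr rfl fun k _ => ?_
  rw [Matrix.diag_apply, Matrix.mul_diagonal, Matrix.mul_apply]
  rw [Finset.sum_mul]
  refine Finset.sum_congr rfl fun j _ => ?_
  rw [Matrix.mul_diagonal, Matrix.star_apply]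
  rw [show (star (W k j)) = (starRingEnd ℂ) (W k j) from rfl, ← Complex.mul_conj]
  ring

lemma trace_mul_conj_right (X Q D : Matrix n n ℂ) :
    (X * (Q * D * star Q)).trace = ((star Q * X * Q) * D).trace := by
  rw [show X * (Q * D * star Q) = X * (Q * D) * star Q by simp only [Matrix.mul_assoc]]
  rw [Matrix.trace_mul_cycle]
  simp only [Matrix.mul_assoc]

lemma unitary_row_sum {T : Matrix n n ℂ} (hT1 : T * star T = 1) (k : n) :
    ∑ j, Complex.normSq (T k j) = 1 := by
  have h := congrFun (congrFun hT1 k) k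
  rw [Matrix.mul_apply, Matrix.one_apply_eq] at h
  have hterm : ∀ j, T k j * star T j k = ((Complex.normSq (T k j) : ℝ) : ℂ) := fun j => by
    rw [Matrix.star_apply, show star (T k j) = (starRingEnd ℂ) (T k j) from rfl,
      Complex.mul_conj]
  rw [Finset.sum_congr rfl fun j _ => hterm j] at h
  exact_mod_cast h

lemma unitary_col_sum {T : Matrix n n ℂ} (hT2 : star T * T = 1) (j : n) :
    ∑ k, Complex.normSq (T k j) = 1 := by
  have h := congrFun (congrFun hT2 j) j
  rw [Matrix.mul_apply, Matrix.one_apply_eq] at h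
  have hterm : ∀ k, star T j k * T k j = ((Complex.normSq (T k j) : ℝ) : ℂ) := fun k => by
    rw [Matrix.star_apply, show star (T k j) = (starRingEnd ℂ) (T k j) from rfl, mul_comm,
      Complex.mul_conj]
  rw [Finset.sum_congr rfl fun k _ => hterm k] at h
  exact_mod_cast h

/- ### doubly stochastic bound -/

lemma ds_bound {N : ℕ} (a b : Fin N → ℝ) (hab : Monovary a b)
    (D : Matrix (Fin N) (Fin N) ℝ) (hD : D ∈ doublyStochastic ℝ (Fin N)) :
    ∑ k, ∑ j, D k j * (a k * b j) ≤ ∑ k, a k * b k := by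
  obtain ⟨w, hw0, hw1, hwD⟩ := exists_eq_sum_perm_of_mem_doublyStochastic hD
  have hperm : ∀ σ : Equiv.Perm (Fin N),
      ∑ k, ∑ j, (σ.permMatrix ℝ) k j * (a k * b j) = ∑ k, a k * b (σ k) := by
    intro σ
    refine Finset.sum_congr rfl fun k _ => ?_
    rw [Finset.sum_eq_single (σ k)]
    · rw [permMatrix_apply', if_pos rfl, one_mul]
    · intro j _ hj
      rw [permMatrix_apply', if_neg (fun h => hj h.symm), zero_mul]
    · intro h; exact absurd (Finset.mem_univ _) h
  calc ∑ k, ∑ j, D k j * (a k * b j)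
      = ∑ σ : Equiv.Perm (Fin N), w σ * ∑ k, a k * b (σ k) := by
        rw [← hwD]
        calc ∑ k, ∑ j, (∑ σ : Equiv.Perm (Fin N), w σ • σ.permMatrix ℝ) k j * (a k * b j)
            = ∑ k, ∑ j, ∑ σ : Equiv.Perm (Fin N),
                w σ * (σ.permMatrix ℝ k j * (a k * b j)) := by
              refine Finset.sum_congr rfl fun k _ => Finset.sum_congr rfl fun j _ => ?_
              rw [Matrix.sum_apply, Finset.sum_mul]
              exact Finset.sum_congr rfl fun σ _ => by
                rw [Matrix.smul_apply, smul_eq_mul, mul_assoc]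
          _ = ∑ k, ∑ σ : Equiv.Perm (Fin N), ∑ j,
                w σ * (σ.permMatrix ℝ k j * (a k * b j)) :=
              Finset.sum_congr rfl fun k _ => Finset.sum_comm
          _ = ∑ σ : Equiv.Perm (Fin N), ∑ k, ∑ j,
                w σ * (σ.permMatrix ℝ k j * (a k * b j)) := Finset.sum_comm
          _ = ∑ σ : Equiv.Perm (Fin N), w σ * ∑ k, a k * b (σ k) := by
              refine Finset.sum_congr rfl fun σ _ => ?_
              simp only [← Finset.mul_sum]
              rw [hperm σ]
    _ ≤ ∑ σ : Equiv.Perm (Fin N), w σ * ∑ k, a k * b k := by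
        refine Finset.sum_le_sum fun σ _ => mul_le_mul_of_nonneg_left ?_ (hw0 σ)
        simpa [smul_eq_mul] using hab.sum_smul_comp_perm_le_sum_smul (σ := σ)
    _ = ∑ k, a k * b k := by rw [← Finset.sum_mul, hw1, one_mul]

end Auxiliary

/-- minimum heat of a DUT+DTT process between Gibbs configurations. -/
theorem min_heat_DUT_DTT {N : ℕ}
    (Hi Hf : Matrix (Fin N) (Fin N) ℂ) (hHi : Hi.IsHermitian) (hHf : Hf.IsHermitian)
    (βi βf : ℝ) (hβi : 0 < βi) (hβf : 0 < βf)
    (αi αf : Fin N → ℝ) (hαi : Antitone αi) (hαf : Antitone αf)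
    (hαie : ∃ e : Equiv.Perm (Fin N), ∀ k, αi k = hHi.eigenvalues (e k))
    (hαfe : ∃ e : Equiv.Perm (Fin N), ∀ k, αf k = hHf.eigenvalues (e k))
    (Zi Zf : ℝ) (hZi : Zi = ∑ k, Real.exp (-βi * αi k))
    (hZf : Zf = ∑ k, Real.exp (-βf * αf k))
    (ρi ρf : Matrix (Fin N) (Fin N) ℂ)
    (hρi : ρi = gibbs βi Hi) (hρf : ρf = gibbs βf Hf) :
    IsLeast {x : ℝ | ∃ V ∈ Matrix.unitaryGroup (Fin N) ℂ,
        x = ((ρf - V * ρi * star V) * Hf).trace.re}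
      (∑ k, αf k * (Real.exp (-βf * αf k) / Zf - Real.exp (-βi * αi (k.rev)) / Zi)) := by
  rcases Nat.eq_zero_or_pos N with hN | hN
  · subst hN
    constructor
    · exact ⟨1, Submonoid.one_mem _, by simp [Matrix.trace]⟩
    · rintro x ⟨V, hV, rfl⟩
      simp [Matrix.trace]
  haveI : Nonempty (Fin N) := ⟨⟨0, hN⟩⟩
  subst hZi hZf
  obtain ⟨ei, hei⟩ := hαie
  obtain ⟨ef, hef⟩ := hαfe
  -- the sorted diagonalizing unitaries
  set P : Matrix (Fin N) (Fin N) ℂ :=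
    (hHi.eigenvectorUnitary : Matrix (Fin N) (Fin N) ℂ) * ((ei⁻¹).permMatrix ℂ) with hPdef
  set Q : Matrix (Fin N) (Fin N) ℂ :=
    (hHf.eigenvectorUnitary : Matrix (Fin N) (Fin N) ℂ) * ((ef⁻¹).permMatrix ℂ) with hQdef
  have hPmem : P ∈ Matrix.unitaryGroup (Fin N) ℂ :=
    Submonoid.mul_mem _ hHi.eigenvectorUnitary.2
      (Matrix.mem_unitaryGroup_iff.mpr (permMatrix_mul_star _))
  have hQmem : Q ∈ Matrix.unitaryGroup (Fin N) ℂ :=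
    Submonoid.mul_mem _ hHf.eigenvectorUnitary.2
      (Matrix.mem_unitaryGroup_iff.mpr (permMatrix_mul_star _))
  have hP1 : P * star P = 1 := Matrix.mem_unitaryGroup_iff.mp hPmem
  have hP2 : star P * P = 1 := Matrix.mem_unitaryGroup_iff'.mp hPmem
  have hQ1 : Q * star Q = 1 := Matrix.mem_unitaryGroup_iff.mp hQmem
  have hQ2 : star Q * Q = 1 := Matrix.mem_unitaryGroup_iff'.mp hQmem
  -- sorted spectral decompositions
  have hHiP : Hi = P * diagonal (fun k => ((αi k : ℝ) : ℂ)) * star P := by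
    have hμ : (RCLike.ofReal ∘ hHi.eigenvalues : Fin N → ℂ)
        = (fun k => ((αi k : ℝ) : ℂ)) ∘ (ei⁻¹ : Equiv.Perm (Fin N)) := by
      funext m
      simp only [Function.comp_apply]
      rw [hei (ei⁻¹ m), Equiv.Perm.inv_def, Equiv.apply_symm_apply]
      rfl
    calc Hi = (hHi.eigenvectorUnitary : Matrix (Fin N) (Fin N) ℂ)
            * diagonal (RCLike.ofReal ∘ hHi.eigenvalues)
            * star (hHi.eigenvectorUnitary : Matrix (Fin N) (Fin N) ℂ) := hHi.spectral_theorem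
      _ = (hHi.eigenvectorUnitary : Matrix (Fin N) (Fin N) ℂ)
            * ((ei⁻¹).permMatrix ℂ * diagonal (fun k => ((αi k : ℝ) : ℂ))
              * star ((ei⁻¹).permMatrix ℂ))
            * star (hHi.eigenvectorUnitary : Matrix (Fin N) (Fin N) ℂ) := by
          rw [permMatrix_conj_diag, ← hμ]
      _ = P * diagonal (fun k => ((αi k : ℝ) : ℂ)) * star P := by
          rw [hPdef, Matrix.star_mul]; simp only [Matrix.mul_assoc]
  have hHfQ : Hf = Q * diagonal (fun k => ((αf k : ℝ) : ℂ)) * star Q := by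
    have hμ : (RCLike.ofReal ∘ hHf.eigenvalues : Fin N → ℂ)
        = (fun k => ((αf k : ℝ) : ℂ)) ∘ (ef⁻¹ : Equiv.Perm (Fin N)) := by
      funext m
      simp only [Function.comp_apply]
      rw [hef (ef⁻¹ m), Equiv.Perm.inv_def, Equiv.apply_symm_apply]
      rfl
    calc Hf = (hHf.eigenvectorUnitary : Matrix (Fin N) (Fin N) ℂ)
            * diagonal (RCLike.ofReal ∘ hHf.eigenvalues)
            * star (hHf.eigenvectorUnitary : Matrix (Fin N) (Fin N) ℂ) := hHf.spectral_theorem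
      _ = (hHf.eigenvectorUnitary : Matrix (Fin N) (Fin N) ℂ)
            * ((ef⁻¹).permMatrix ℂ * diagonal (fun k => ((αf k : ℝ) : ℂ))
              * star ((ef⁻¹).permMatrix ℂ))
            * star (hHf.eigenvectorUnitary : Matrix (Fin N) (Fin N) ℂ) := by
          rw [permMatrix_conj_diag, ← hμ]
      _ = Q * diagonal (fun k => ((αf k : ℝ) : ℂ)) * star Q := by
          rw [hQdef, Matrix.star_mul]; simp only [Matrix.mul_assoc]
  -- Gibbs populations
  set pi : Fin N → ℝ := fun j => Real.exp (-βi * αi j) / ∑ k, Real.exp (-βi * αi k) with hpidef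
  set pf : Fin N → ℝ := fun j => Real.exp (-βf * αf j) / ∑ k, Real.exp (-βf * αf k) with hpfdef
  have hρiP : ρi = P * diagonal (fun j => ((pi j : ℝ) : ℂ)) * star P := by
    rw [hρi, hHiP]; exact gibbs_conj βi hP1 hP2 αi
  have hρfQ : ρf = Q * diagonal (fun j => ((pf j : ℝ) : ℂ)) * star Q := by
    rw [hρf, hHfQ]; exact gibbs_conj βf hQ1 hQ2 αf
  have hZipos : (0 : ℝ) < ∑ k, Real.exp (-βi * αi k) :=
    Finset.sum_pos (fun k _ => Real.exp_pos _) Finset.univ_nonempty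
  -- monotonicity of populations
  have hpi_mono : Monotone pi := by
    intro j j' hj
    have h1 : βi * αi j' ≤ βi * αi j := mul_le_mul_of_nonneg_left (hαi hj) hβi.le
    have h2 : Real.exp (-βi * αi j) ≤ Real.exp (-βi * αi j') := by
      apply Real.exp_le_exp.mpr; nlinarith
    simp only [hpidef]
    exact (div_le_div_iff_of_pos_right hZipos).mpr h2
  -- trace of ρf Hf
  have e1 : (ρf * Hf).trace = ((∑ k, pf k * αf k : ℝ) : ℂ) := by
    rw [hρfQ, hHfQ]; exact trace_conj_mul_conj_same hQ2 pf αf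
  constructor
  · -- the minimum is attained
    refine ⟨Q * (Fin.revPerm.permMatrix ℂ) * star P, ?_, ?_⟩
    · exact Submonoid.mul_mem _ (Submonoid.mul_mem _ hQmem
        (Matrix.mem_unitaryGroup_iff.mpr (permMatrix_mul_star _)))
        (Matrix.mem_unitaryGroup_iff.mpr (by rw [star_star]; exact hP2))
    · have hconj : (Q * (Fin.revPerm.permMatrix ℂ) * star P) * ρi
          * star (Q * (Fin.revPerm.permMatrix ℂ) * star P)
          = Q * diagonal ((fun j => ((pi j : ℝ) : ℂ)) ∘ Fin.revPerm) * star Q := by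
        rw [hρiP, ← permMatrix_conj_diag Fin.revPerm (fun j => ((pi j : ℝ) : ℂ))]
        simp only [Matrix.star_mul, star_star, Matrix.mul_assoc, unitary_cancel_left hP2]
      have hfun : ((fun j => ((pi j : ℝ) : ℂ)) ∘ Fin.revPerm)
          = fun k : Fin N => ((pi k.rev : ℝ) : ℂ) := by
        funext k; simp [Function.comp, Fin.revPerm_apply]
      rw [hfun] at hconj
      have e2 : ((Q * diagonal (fun k : Fin N => ((pi k.rev : ℝ) : ℂ)) * star Q) * Hf).trace
          = ((∑ k, pi k.rev * αf k : ℝ) : ℂ) := by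
        rw [hHfQ]; exact trace_conj_mul_conj_same hQ2 (fun k : Fin N => pi k.rev) αf
      rw [Matrix.sub_mul, Matrix.trace_sub, hconj, e1, e2, Complex.sub_re,
        Complex.ofReal_re, Complex.ofReal_re]
      show ∑ k, αf k * (pf k - pi k.rev) = _
      rw [← Finset.sum_sub_distrib]
      exact Finset.sum_congr rfl fun k _ => by ring
  · -- lower bound
    rintro x ⟨V, hVmem, rfl⟩
    have hV1 : V * star V = 1 := Matrix.mem_unitaryGroup_iff.mp hVmem
    set T : Matrix (Fin N) (Fin N) ℂ := star Q * V * P with hTdef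
    have hTmem : T ∈ Matrix.unitaryGroup (Fin N) ℂ :=
      Submonoid.mul_mem _ (Submonoid.mul_mem _
        (Matrix.mem_unitaryGroup_iff.mpr (by rw [star_star]; exact hQ2)) hVmem) hPmem
    have hT1 : T * star T = 1 := Matrix.mem_unitaryGroup_iff.mp hTmem
    have hT2 : star T * T = 1 := Matrix.mem_unitaryGroup_iff'.mp hTmem
    have hVtr : ((V * ρi * star V) * Hf).trace
        = ((∑ k, ∑ j, αf k * pi j * Complex.normSq (T k j) : ℝ) : ℂ) := by
      rw [hρiP, hHfQ, trace_mul_conj_right]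
      rw [show star Q * (V * (P * diagonal (fun j => ((pi j : ℝ) : ℂ)) * star P) * star V) * Q
          = T * diagonal (fun j => ((pi j : ℝ) : ℂ)) * star T by
        rw [hTdef]; simp only [Matrix.star_mul, star_star, Matrix.mul_assoc]]
      exact trace_conj_general T pi αf
    have hb : Antitone (fun j : Fin N => pi (Fin.rev j)) := fun j j' h =>
      hpi_mono (Fin.rev_le_rev.mpr h)
    have hmv : Monovary αf (fun j : Fin N => pi (Fin.rev j)) := hαf.monovary hb
    set D : Matrix (Fin N) (Fin N) ℝ :=
      Matrix.of (fun k j => Complex.normSq (T k (Fin.rev j))) with hDdef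
    have hD : D ∈ doublyStochastic ℝ (Fin N) := by
      rw [mem_doublyStochastic_iff_sum]
      refine ⟨fun i j => Complex.normSq_nonneg _, fun i => ?_, fun j => ?_⟩
      · have := Equiv.sum_comp Fin.revPerm (fun j => Complex.normSq (T i j))
        simp only [Fin.revPerm_apply] at this
        calc ∑ j, D i j = ∑ j, Complex.normSq (T i (Fin.rev j)) := rfl
          _ = ∑ j, Complex.normSq (T i j) := this
          _ = 1 := unitary_row_sum hT1 i
      · exact unitary_col_sum hT2 _
    have hkey := ds_bound αf (fun j => pi (Fin.rev j)) hmv D hD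
    have hre : ∑ k, ∑ j, αf k * pi j * Complex.normSq (T k j)
        = ∑ k, ∑ j, D k j * (αf k * pi (Fin.rev j)) := by
      refine Finset.sum_congr rfl fun k _ => ?_
      have := Equiv.sum_comp Fin.revPerm (fun j => αf k * pi j * Complex.normSq (T k j))
      simp only [Fin.revPerm_apply] at this
      rw [← this]
      refine Finset.sum_congr rfl fun j _ => ?_
      show αf k * pi (Fin.rev j) * Complex.normSq (T k (Fin.rev j))
          = D k j * (αf k * pi (Fin.rev j))
      rw [hDdef]
      show αf k * pi (Fin.rev j) * Complex.normSq (T k (Fin.rev j))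
          = Complex.normSq (T k (Fin.rev j)) * (αf k * pi (Fin.rev j))
      ring
    have hsum_le : ∑ k, ∑ j, αf k * pi j * Complex.normSq (T k j)
        ≤ ∑ k, αf k * pi (Fin.rev k) := by rw [hre]; exact hkey
    rw [Matrix.sub_mul, Matrix.trace_sub, e1, hVtr, Complex.sub_re,
      Complex.ofReal_re, Complex.ofReal_re]
    show ∑ k, αf k * (pf k - pi k.rev) ≤ _
    have heq : ∑ k, αf k * (pf k - pi k.rev)
        = ∑ k, pf k * αf k - ∑ k, αf k * pi (Fin.rev k) := by
      rw [← Finset.sum_sub_distrib]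
      exact Finset.sum_congr rfl fun k _ => by ring
    rw [heq]
    exact sub_le_sub_left hsum_le _
end

section
/- Let ρ̃_k ≠ ρ_{k+1} be positive-definite density matrices and p ∈ (0,1), and set ρ_m = p·ρ̃_k + (1−p)·ρ_{k+1}. Then −tr[(ρ_m − ρ̃_k) ln ρ_m] − tr[(ρ_{k+1} − ρ_m) ln ρ_{k+1}] + tr[(ρ_{k+1} − ρ̃_k) ln ρ_{k+1}] > 0; i.e., inserting the intermediate thermal configuration ρ_m strictly increases the discrete heat functional Λ. -/
open Matrix BigOperators ComplexOrder

section Helpers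
variable {n : Type*} [Fintype n] [DecidableEq n]

lemma matFun_id {A : Matrix n n ℂ} (hA : A.IsHermitian) : matFun (fun x => x) A = A := by
  rw [matFun, dif_pos hA]
  exact (hA.spectral_theorem).symm

lemma trace_matFun_mul_matFun {A B : Matrix n n ℂ} (hA : A.IsHermitian) (hB : B.IsHermitian)
    (g f : ℝ → ℝ) :
    (matFun g A * matFun f B).trace =
      ((∑ i, ∑ j, g (hA.eigenvalues i) * f (hB.eigenvalues j) *
        Complex.normSq ((star (hA.eigenvectorUnitary : Matrix n n ℂ) *
          (hB.eigenvectorUnitary : Matrix n n ℂ)) i j) : ℝ) : ℂ) := by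
  rw [matFun, dif_pos hA, matFun, dif_pos hB]
  set U : Matrix n n ℂ := (hA.eigenvectorUnitary : Matrix n n ℂ) with hU
  set V : Matrix n n ℂ := (hB.eigenvectorUnitary : Matrix n n ℂ) with hV
  set M : Matrix n n ℂ := star U * V with hM
  have key : (U * Matrix.diagonal (fun i => (g (hA.eigenvalues i) : ℂ)) * star U) *
      (V * Matrix.diagonal (fun j => (f (hB.eigenvalues j) : ℂ)) * star V) =
      U * (Matrix.diagonal (fun i => (g (hA.eigenvalues i) : ℂ)) * M *
        Matrix.diagonal (fun j => (f (hB.eigenvalues j) : ℂ)) * star M) * star U := by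
    rw [hM]
    simp only [Matrix.star_mul, star_star, Matrix.mul_assoc,
      (Matrix.mem_unitaryGroup_iff).mp hA.eigenvectorUnitary.2, Matrix.mul_one]
    rw [(Matrix.mem_unitaryGroup_iff).mp hA.eigenvectorUnitary.2, Matrix.mul_one]
  rw [key, Matrix.trace_mul_comm, ← Matrix.mul_assoc,
    (Matrix.mem_unitaryGroup_iff').mp hA.eigenvectorUnitary.2]
  rw [Matrix.one_mul, Matrix.trace]
  push_cast
  rw [Finset.sum_congr rfl]
  intro i _
  rw [Matrix.diag_apply, Matrix.mul_apply]
  rw [Finset.sum_congr rfl]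
  intro j _
  rw [Matrix.mul_diagonal, Matrix.diagonal_mul, Matrix.star_apply, Complex.star_def]
  push_cast
  rw [← Complex.mul_conj]
  ring

lemma klein_pos {A B : Matrix n n ℂ} (hA : A.PosDef) (hB : B.PosDef) (hne : A ≠ B) :
    0 < (((A - B) * (matLog A - matLog B)).trace).re := by
  have hAh : A.IsHermitian := hA.1
  have hBh : B.IsHermitian := hB.1
  set U : Matrix n n ℂ := (hAh.eigenvectorUnitary : Matrix n n ℂ) with hU
  set V : Matrix n n ℂ := (hBh.eigenvectorUnitary : Matrix n n ℂ) with hV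
  set M : Matrix n n ℂ := star U * V with hMdef
  set a : n → ℝ := hAh.eigenvalues with ha
  set b : n → ℝ := hBh.eigenvalues with hb
  set c : n → n → ℝ := fun i j => Complex.normSq (M i j) with hc
  have hUU : star U * U = 1 := (Matrix.mem_unitaryGroup_iff').mp hAh.eigenvectorUnitary.2
  have hUU' : U * star U = 1 := (Matrix.mem_unitaryGroup_iff).mp hAh.eigenvectorUnitary.2
  have hVV : star V * V = 1 := (Matrix.mem_unitaryGroup_iff').mp hBh.eigenvectorUnitary.2
  have hVV' : V * star V = 1 := (Matrix.mem_unitaryGroup_iff).mp hBh.eigenvectorUnitary.2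
  have hMM : M * star M = 1 := by
    rw [hMdef, Matrix.star_mul, star_star, Matrix.mul_assoc, ← Matrix.mul_assoc V, hVV',
      Matrix.one_mul, hUU]
  have hMM' : star M * M = 1 := by
    rw [hMdef, Matrix.star_mul, star_star, Matrix.mul_assoc, ← Matrix.mul_assoc U, hUU',
      Matrix.one_mul, hVV]
  -- row sums and column sums of c
  have hrow : ∀ i, ∑ j, c i j = 1 := by
    intro i
    have h1 : (M * star M) i i = 1 := by rw [hMM, Matrix.one_apply_eq]
    rw [Matrix.mul_apply] at h1
    have : ∀ j, M i j * (star M) j i = (c i j : ℂ) := by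
      intro j
      rw [Matrix.star_apply, Complex.star_def, Complex.mul_conj]
    rw [Finset.sum_congr rfl (fun j _ => this j)] at h1
    have := congrArg Complex.re h1
    push_cast at this
    simpa using this
  have hcol : ∀ j, ∑ i, c i j = 1 := by
    intro j
    have h1 : (star M * M) j j = 1 := by rw [hMM', Matrix.one_apply_eq]
    rw [Matrix.mul_apply] at h1
    have : ∀ i, (star M) j i * M i j = (c i j : ℂ) := by
      intro i
      rw [Matrix.star_apply, Complex.star_def, mul_comm, Complex.mul_conj]
    rw [Finset.sum_congr rfl (fun i _ => this i)] at h1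
    have := congrArg Complex.re h1
    push_cast at this
    simpa using this
  -- the four traces
  have TAB : (A * matLog B).trace = ((∑ i, ∑ j, a i * Real.log (b j) * c i j : ℝ) : ℂ) := by
    rw [← matFun_id hAh, matLog, trace_matFun_mul_matFun hAh hBh]
  have TBA : (B * matLog A).trace = ((∑ i, ∑ j, b i * Real.log (a j) *
      Complex.normSq ((star V * U) i j) : ℝ) : ℂ) := by
    rw [← matFun_id hBh, matLog, trace_matFun_mul_matFun hBh hAh]
  have TAA : (A * matLog A).trace = ((∑ i, a i * Real.log (a i) : ℝ) : ℂ) := by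
    have e : A * matLog A = matFun (fun x => x) A * matFun Real.log A := by
      rw [matFun_id hAh, matLog]
    rw [e, trace_matFun_mul_matFun hAh hAh]
    rw [Complex.ofReal_inj, (Matrix.mem_unitaryGroup_iff').mp hAh.eigenvectorUnitary.2]
    refine Finset.sum_congr rfl fun i _ => ?_
    rw [Finset.sum_eq_single i]
    · simp
      rfl
    · intro j _ hj
      simp [Matrix.one_apply_ne' hj]
    · simp
  have TBB : (B * matLog B).trace = ((∑ i, b i * Real.log (b i) : ℝ) : ℂ) := by
    have e : B * matLog B = matFun (fun x => x) B * matFun Real.log B := by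
      rw [matFun_id hBh, matLog]
    rw [e, trace_matFun_mul_matFun hBh hBh]
    rw [Complex.ofReal_inj, (Matrix.mem_unitaryGroup_iff').mp hBh.eigenvectorUnitary.2]
    refine Finset.sum_congr rfl fun i _ => ?_
    rw [Finset.sum_eq_single i]
    · simp
      rfl
    · intro j _ hj
      simp [Matrix.one_apply_ne' hj]
    · simp
  -- expand the trace
  have expand : (((A - B) * (matLog A - matLog B)).trace).re =
      ∑ i, ∑ j, c i j * ((a i - b j) * (Real.log (a i) - Real.log (b j))) := by
    have hmul : (A - B) * (matLog A - matLog B)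
        = A * matLog A - A * matLog B - B * matLog A + B * matLog B := by
      noncomm_ring
    have hre : (((A - B) * (matLog A - matLog B)).trace).re =
        (∑ i, a i * Real.log (a i)) - (∑ i, ∑ j, a i * Real.log (b j) * c i j)
        - (∑ i, ∑ j, b i * Real.log (a j) * Complex.normSq ((star V * U) i j))
        + (∑ i, b i * Real.log (b i)) := by
      rw [hmul, Matrix.trace_add, Matrix.trace_sub, Matrix.trace_sub, TAA, TAB, TBA, TBB]
      simp
    rw [hre]
    have h3 : (∑ i, ∑ j, b i * Real.log (a j) * Complex.normSq ((star V * U) i j))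
        = ∑ i, ∑ j, c i j * (b j * Real.log (a i)) := by
      have hsM : star V * U = star M := by rw [hMdef, Matrix.star_mul, star_star]
      have e : ∀ i j, b i * Real.log (a j) * Complex.normSq ((star V * U) i j)
          = c j i * (b i * Real.log (a j)) := by
        intro i j
        rw [hsM, Matrix.star_apply, Complex.star_def, Complex.normSq_conj, hc]
        ring
      simp only [e]
      exact Finset.sum_comm
    have h2 : (∑ i, ∑ j, a i * Real.log (b j) * c i j)
        = ∑ i, ∑ j, c i j * (a i * Real.log (b j)) := by
      refine Finset.sum_congr rfl fun i _ => Finset.sum_congr rfl fun j _ => by ring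
    have h1 : ∑ i, a i * Real.log (a i) = ∑ i, ∑ j, c i j * (a i * Real.log (a i)) := by
      refine Finset.sum_congr rfl fun i _ => ?_
      rw [Finset.sum_congr rfl fun j _ => mul_comm (c i j) _, ← Finset.mul_sum, hrow i, mul_one]
    have h4 : ∑ i, b i * Real.log (b i) = ∑ i, ∑ j, c i j * (b j * Real.log (b j)) := by
      rw [Finset.sum_comm]
      refine Finset.sum_congr rfl fun j _ => ?_
      rw [Finset.sum_congr rfl fun i _ => mul_comm (c i j) _, ← Finset.mul_sum, hcol j, mul_one]
    rw [h1, h2, h3, h4, ← Finset.sum_sub_distrib, ← Finset.sum_sub_distrib,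
      ← Finset.sum_add_distrib]
    refine Finset.sum_congr rfl fun i _ => ?_
    rw [← Finset.sum_sub_distrib, ← Finset.sum_sub_distrib, ← Finset.sum_add_distrib]
    refine Finset.sum_congr rfl fun j _ => ?_
    ring
  rw [expand]
  -- positivity of each term
  have hterm : ∀ i j, 0 ≤ c i j * ((a i - b j) * (Real.log (a i) - Real.log (b j))) := by
    intro i j
    refine mul_nonneg (Complex.normSq_nonneg _) ?_
    rcases lt_trichotomy (a i) (b j) with h | h | h
    · have := Real.log_lt_log (hA.eigenvalues_pos i) h
      nlinarith
    · simp [h]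
    · have := Real.log_lt_log (hB.eigenvalues_pos j) h
      nlinarith
  by_contra hle
  push_neg at hle
  have hzero : ∀ i ∈ Finset.univ, ∀ j ∈ Finset.univ,
      c i j * ((a i - b j) * (Real.log (a i) - Real.log (b j))) = 0 := by
    have hS0 : ∑ i, ∑ j, c i j * ((a i - b j) * (Real.log (a i) - Real.log (b j))) = 0 :=
      le_antisymm hle (Finset.sum_nonneg fun i _ => Finset.sum_nonneg fun j _ => hterm i j)
    intro i _ j _
    have := (Finset.sum_eq_zero_iff_of_nonneg
      (fun i _ => Finset.sum_nonneg fun j _ => hterm i j)).mp hS0 i (Finset.mem_univ i)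
    exact (Finset.sum_eq_zero_iff_of_nonneg (fun j _ => hterm i j)).mp this j (Finset.mem_univ j)
  -- each i j : M i j = 0 or a i = b j
  have hMij : ∀ i j, ((a i : ℂ)) * M i j = M i j * (b j : ℂ) := by
    intro i j
    rcases eq_or_ne (a i) (b j) with h | h
    · rw [h, mul_comm]
    · have hpos : 0 < (a i - b j) * (Real.log (a i) - Real.log (b j)) := by
        rcases lt_or_gt_of_ne h with hlt | hgt
        · have := Real.log_lt_log (hA.eigenvalues_pos i) hlt
          nlinarith
        · have := Real.log_lt_log (hB.eigenvalues_pos j) hgt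
          nlinarith
      have hc0 : c i j = 0 := by
        have := hzero i (Finset.mem_univ i) j (Finset.mem_univ j)
        rcases mul_eq_zero.mp this with h0 | h0
        · exact h0
        · exact absurd h0 (ne_of_gt hpos)
      have : M i j = 0 := by
        have := Complex.normSq_eq_zero.mp hc0
        exact this
      rw [this, mul_zero, zero_mul]
  -- conclude A = B
  have hDM : Matrix.diagonal (fun i => (a i : ℂ)) * M = M * Matrix.diagonal (fun j => (b j : ℂ)) := by
    ext i j
    rw [Matrix.diagonal_mul, Matrix.mul_diagonal]
    exact hMij i j
  have hAeq : A = U * Matrix.diagonal (fun i => (a i : ℂ)) * star U := hAh.spectral_theorem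
  have hBeq : B = V * Matrix.diagonal (fun j => (b j : ℂ)) * star V := hBh.spectral_theorem
  have hUM : U * M = V := by
    rw [hMdef, ← Matrix.mul_assoc, hUU', Matrix.one_mul]
  have hAV : A * V = B * V := by
    calc A * V = U * (Matrix.diagonal (fun i => (a i : ℂ)) * M) := by
          rw [hAeq, hMdef]
          simp only [Matrix.mul_assoc]
      _ = U * (M * Matrix.diagonal (fun j => (b j : ℂ))) := by rw [hDM]
      _ = V * Matrix.diagonal (fun j => (b j : ℂ)) := by rw [← Matrix.mul_assoc, hUM]
      _ = B * V := by
          rw [hBeq]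
          simp only [Matrix.mul_assoc]
          rw [hVV, Matrix.mul_one]
  exact hne (by
    calc A = A * (V * star V) := by rw [hVV', Matrix.mul_one]
    _ = (A * V) * star V := by rw [Matrix.mul_assoc]
    _ = (B * V) * star V := by rw [hAV]
    _ = B * (V * star V) := by rw [Matrix.mul_assoc]
    _ = B := by rw [hVV', Matrix.mul_one])

lemma posDef_real_smul {r : ℝ} (hr : 0 < r) {A : Matrix n n ℂ} (hA : A.PosDef) :
    (r • A).PosDef := by
  rw [Matrix.posDef_iff_dotProduct_mulVec]
  constructor
  · rw [Matrix.IsHermitian, Matrix.conjTranspose_smul, star_trivial, hA.1.eq]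
  · intro x hx
    have h1 : star x ⬝ᵥ ((r • A) *ᵥ x) = (r : ℂ) * (star x ⬝ᵥ (A *ᵥ x)) := by
      rw [← Complex.coe_smul, Matrix.smul_mulVec, dotProduct_smul, smul_eq_mul]
    rw [h1]
    exact mul_pos (by exact_mod_cast hr) (hA.dotProduct_mulVec_pos hx)


end Helpers

/-- inserting an intermediate thermal configuration strictly increases Λ. -/
theorem augmentation_strict_increase {n : Type*} [Fintype n] [DecidableEq n]
    (ρk ρk1 : Matrix n n ℂ) (hk : IsDensity ρk) (hk1 : IsDensity ρk1)
    (hkpd : ρk.PosDef) (hk1pd : ρk1.PosDef) (hne : ρk ≠ ρk1)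
    (p : ℝ) (hp : p ∈ Set.Ioo (0:ℝ) 1)
    (ρm : Matrix n n ℂ) (hm : ρm = p • ρk + (1 - p) • ρk1) :
    0 < -(((ρm - ρk) * matLog ρm).trace.re) - (((ρk1 - ρm) * matLog ρk1).trace.re)
        + (((ρk1 - ρk) * matLog ρk1).trace.re) := by
  obtain ⟨hp0, hp1⟩ := hp
  have hmpd : ρm.PosDef := by
    rw [hm]
    exact (posDef_real_smul hp0 hkpd).add (posDef_real_smul (by linarith) hk1pd)
  have hsub : ρm - ρk1 = p • (ρk - ρk1) := by rw [hm]; module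
  have hmne : ρm ≠ ρk1 := by
    intro h
    apply hne
    have h0 : p • (ρk - ρk1) = 0 := by rw [← hsub, h, sub_self]
    rcases smul_eq_zero.mp h0 with h' | h'
    · exact absurd h' (ne_of_gt hp0)
    · exact sub_eq_zero.mp h'
  have hkm : ρk - ρm = ((1 - p) / p) • (ρm - ρk1) := by
    rw [hsub, smul_smul, div_mul_cancel₀ _ (ne_of_gt hp0), hm]
    module
  set Lm := matLog ρm with hLm
  set L1 := matLog ρk1 with hL1
  have h23 : ((ρk1 - ρk) * L1).trace - ((ρk1 - ρm) * L1).trace = ((ρm - ρk) * L1).trace := by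
    rw [← Matrix.trace_sub, ← Matrix.sub_mul]
    congr 2
    abel
  have hG : -(((ρm - ρk) * Lm).trace.re) - (((ρk1 - ρm) * L1).trace.re)
        + (((ρk1 - ρk) * L1).trace.re)
      = (((ρk - ρm) * (Lm - L1)).trace).re := by
    have e : (ρk - ρm) * (Lm - L1)
        = ((ρk1 - ρk) * L1 - (ρk1 - ρm) * L1) - (ρm - ρk) * Lm := by
      noncomm_ring
    rw [e, Matrix.trace_sub, Matrix.trace_sub]
    simp only [Complex.sub_re]
    ring
  rw [hG, hkm, Matrix.smul_mul, Matrix.trace_smul]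
  have hK := klein_pos hmpd hk1pd hmne
  rw [← hLm, ← hL1] at hK
  have hcoef : 0 < (1 - p) / p := div_pos (by linarith) hp0
  have : (((1 - p) / p) • ((ρm - ρk1) * (Lm - L1)).trace).re
      = ((1 - p) / p) * (((ρm - ρk1) * (Lm - L1)).trace).re := by
    rw [Complex.real_smul, Complex.mul_re, Complex.ofReal_re, Complex.ofReal_im]; ring
  rw [this]
  exact mul_pos hcoef hK
end

section
/- Let ρ_k and ρ_{k+1} be positive-definite density matrices, and for n ≥ 1 define interpolated states ρ'_ℓ = (1 − ℓ/n)ρ_k + (ℓ/n)ρ_{k+1} for ℓ = 0,…,n. Then Λ_n := Σ_{ℓ=0}^{n−1} tr[(ρ'_ℓ − ρ'_{ℓ+1}) ln ρ'_{ℓ+1}] satisfies ΔS − (S(ρ_{k+1}‖ρ_k) + S(ρ_k‖ρ_{k+1}))/n ≤ Λ_n ≤ ΔS, where ΔS = S(ρ_{k+1}) − S(ρ_k). -/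
open Matrix BigOperators ComplexOrder

section Helpers
set_option linter.unusedSectionVars false
variable {n : Type*} [Fintype n] [DecidableEq n]


lemma myPosSemidef_smul {M : Matrix n n ℂ} (hM : M.PosSemidef) {r : ℝ} (hr : 0 ≤ r) :
    (r • M).PosSemidef := by
  refine Matrix.PosSemidef.of_dotProduct_mulVec_nonneg ?_ fun x => ?_
  · unfold Matrix.IsHermitian
    rw [conjTranspose_smul, hM.1, star_trivial]
  · rw [smul_mulVec, dotProduct_smul, Complex.real_smul]
    exact mul_nonneg (Complex.zero_le_real.mpr hr) (hM.dotProduct_mulVec_nonneg x)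

lemma myPosDef_smul {M : Matrix n n ℂ} (hM : M.PosDef) {r : ℝ} (hr : 0 < r) :
    (r • M).PosDef := by
  refine Matrix.PosDef.of_dotProduct_mulVec_pos (myPosSemidef_smul hM.posSemidef hr.le).1 fun x hx => ?_
  rw [smul_mulVec, dotProduct_smul, Complex.real_smul]
  exact mul_pos (by exact_mod_cast hr) (hM.dotProduct_mulVec_pos hx)

lemma myConvex_pd {A B : Matrix n n ℂ} (hA : A.PosDef) (hB : B.PosDef) {t : ℝ}
    (h0 : 0 ≤ t) (h1 : t ≤ 1) : ((1 - t) • A + t • B).PosDef := by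
  rcases eq_or_lt_of_le h1 with h | h
  · subst h; simpa using hB
  · exact (myPosDef_smul hA (by linarith)).add_posSemidef
      (myPosSemidef_smul hB.posSemidef h0)


lemma matLog_eq {A : Matrix n n ℂ} (hA : A.IsHermitian) :
    matLog A = (hA.eigenvectorUnitary : Matrix n n ℂ) *
      Matrix.diagonal (fun i => (Real.log (hA.eigenvalues i) : ℂ)) *
      star (hA.eigenvectorUnitary : Matrix n n ℂ) := by
  rw [matLog, matFun, dif_pos hA]

lemma unitary_mul_star {A : Matrix n n ℂ} (hA : A.IsHermitian) :
    (hA.eigenvectorUnitary : Matrix n n ℂ) * star (hA.eigenvectorUnitary : Matrix n n ℂ) = 1 :=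
  (Matrix.mem_unitaryGroup_iff).mp hA.eigenvectorUnitary.2

lemma unitary_star_mul {A : Matrix n n ℂ} (hA : A.IsHermitian) :
    star (hA.eigenvectorUnitary : Matrix n n ℂ) * (hA.eigenvectorUnitary : Matrix n n ℂ) = 1 :=
  (Matrix.mem_unitaryGroup_iff').mp hA.eigenvectorUnitary.2

lemma trace_mul_matLog {ρ σ : Matrix n n ℂ} (hρ : ρ.IsHermitian) (hσ : σ.IsHermitian) :
    ((ρ * matLog σ).trace).re =
      ∑ i, ∑ j, hρ.eigenvalues i *
        Complex.normSq ((star (hρ.eigenvectorUnitary : Matrix n n ℂ) *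
          (hσ.eigenvectorUnitary : Matrix n n ℂ)) i j) * Real.log (hσ.eigenvalues j) := by
  set U := (hρ.eigenvectorUnitary : Matrix n n ℂ) with hU
  set V := (hσ.eigenvectorUnitary : Matrix n n ℂ) with hV
  set W := star U * V with hW
  set Dp := Matrix.diagonal (fun i => (hρ.eigenvalues i : ℂ)) with hDp
  set Dl := Matrix.diagonal (fun j => (Real.log (hσ.eigenvalues j) : ℂ)) with hDl
  have hρeq : ρ = U * Dp * star U := by
    rw [hρ.spectral_theorem, Unitary.conjStarAlgAut_apply]; rfl
  have hlog : matLog σ = V * Dl * star V := matLog_eq hσ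
  have key : (ρ * matLog σ).trace = (Dp * (W * Dl * star W)).trace := by
    rw [hρeq, hlog]
    rw [show U * Dp * star U * (V * Dl * star V) = U * (Dp * (star U * (V * Dl * star V))) by
      simp only [Matrix.mul_assoc]]
    rw [Matrix.trace_mul_comm U, Matrix.mul_assoc]
    rw [hW, StarMul.star_mul, star_star]
    simp only [Matrix.mul_assoc]
  rw [key]
  have hentry : ∀ i, (W * Dl * star W) i i = ∑ j, (Real.log (hσ.eigenvalues j) : ℂ) *
      (Complex.normSq (W i j) : ℂ) := by
    intro i
    rw [Matrix.mul_apply]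
    refine Finset.sum_congr rfl fun j _ => ?_
    rw [Matrix.mul_diagonal, Matrix.star_apply]
    rw [show W i j * (Real.log (hσ.eigenvalues j) : ℂ) * star (W i j) =
      (Real.log (hσ.eigenvalues j) : ℂ) * (W i j * star (W i j)) by ring]
    rw [Complex.star_def, Complex.mul_conj]
  rw [Matrix.trace]
  simp only [Matrix.diag_apply, hDp, Matrix.diagonal_mul]
  simp only [hentry]
  simp only [← Complex.ofReal_mul, ← Complex.ofReal_sum, Complex.ofReal_re]
  refine Finset.sum_congr rfl fun i _ => ?_
  rw [Finset.mul_sum]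
  exact Finset.sum_congr rfl fun j _ => by ring

/-- Row sums of |W i j|² are 1; column sums are 1. -/
lemma normSq_row_sum {ρ σ : Matrix n n ℂ} (hρ : ρ.IsHermitian) (hσ : σ.IsHermitian) (i : n) :
    ∑ j, Complex.normSq ((star (hρ.eigenvectorUnitary : Matrix n n ℂ) *
      (hσ.eigenvectorUnitary : Matrix n n ℂ)) i j) = 1 := by
  set U := (hρ.eigenvectorUnitary : Matrix n n ℂ)
  set V := (hσ.eigenvectorUnitary : Matrix n n ℂ)
  set W := star U * V with hW
  have h : W * star W = 1 := by
    rw [hW, StarMul.star_mul, star_star]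
    calc star U * V * (star V * U) = star U * (V * star V) * U := by
          simp only [Matrix.mul_assoc]
      _ = 1 := by rw [unitary_mul_star hσ, Matrix.mul_one, unitary_star_mul hρ]
  have h2 : (W * star W) i i = 1 := by rw [h]; simp [Matrix.one_apply]
  rw [Matrix.mul_apply] at h2
  have : ∑ j, (Complex.normSq (W i j) : ℂ) = 1 := by
    rw [← h2]
    refine Finset.sum_congr rfl fun j _ => ?_
    rw [Matrix.star_apply, Complex.star_def, Complex.mul_conj]
  exact_mod_cast this

lemma normSq_col_sum {ρ σ : Matrix n n ℂ} (hρ : ρ.IsHermitian) (hσ : σ.IsHermitian) (j : n) :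
    ∑ i, Complex.normSq ((star (hρ.eigenvectorUnitary : Matrix n n ℂ) *
      (hσ.eigenvectorUnitary : Matrix n n ℂ)) i j) = 1 := by
  set U := (hρ.eigenvectorUnitary : Matrix n n ℂ)
  set V := (hσ.eigenvectorUnitary : Matrix n n ℂ)
  set W := star U * V with hW
  have h : star W * W = 1 := by
    rw [hW, StarMul.star_mul, star_star]
    calc star V * U * (star U * V) = star V * (U * star U) * V := by
          simp only [Matrix.mul_assoc]
      _ = 1 := by rw [unitary_mul_star hρ, Matrix.mul_one, unitary_star_mul hσ]
  have h2 : (star W * W) j j = 1 := by rw [h]; simp [Matrix.one_apply]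
  rw [Matrix.mul_apply] at h2
  have : ∑ i, (Complex.normSq (W i j) : ℂ) = 1 := by
    rw [← h2]
    refine Finset.sum_congr rfl fun i _ => ?_
    rw [Matrix.star_apply, Complex.star_def]
    rw [show (starRingEnd ℂ) (W i j) * W i j = W i j * (starRingEnd ℂ) (W i j) by ring,
      Complex.mul_conj]
  exact_mod_cast this

/-- Sum of eigenvalues equals the (real) trace. -/
lemma sum_eigenvalues_eq_one {ρ : Matrix n n ℂ} (hρ : ρ.IsHermitian) (h1 : ρ.trace = 1) :
    ∑ i, hρ.eigenvalues i = 1 := by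
  have := hρ.spectral_theorem
  have htr : ρ.trace = (Matrix.diagonal (RCLike.ofReal ∘ hρ.eigenvalues) : Matrix n n ℂ).trace := by
    conv_lhs => rw [this]
    rw [Unitary.conjStarAlgAut_apply, Matrix.trace_mul_cycle, unitary_star_mul hρ, Matrix.one_mul]
  rw [h1, Matrix.trace_diagonal] at htr
  have : ((∑ i, hρ.eigenvalues i : ℝ) : ℂ) = 1 := by
    rw [Complex.ofReal_sum]; exact htr.symm ▸ rfl
  exact_mod_cast this

/-- Klein's inequality. -/
lemma klein {ρ σ : Matrix n n ℂ} (hρ : ρ.PosDef) (hσ : σ.PosDef)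
    (h1 : ρ.trace = 1) (h2 : σ.trace = 1) : 0 ≤ relEnt ρ σ := by
  unfold relEnt
  rw [Complex.sub_re, trace_mul_matLog hρ.1 hσ.1, trace_mul_matLog hρ.1 hρ.1]
  set p := hρ.1.eigenvalues
  set q := hσ.1.eigenvalues
  set c : n → n → ℝ := fun i j => Complex.normSq ((star (hρ.1.eigenvectorUnitary : Matrix n n ℂ) *
    (hσ.1.eigenvectorUnitary : Matrix n n ℂ)) i j) with hc
  have hid : (star (hρ.1.eigenvectorUnitary : Matrix n n ℂ) *
      (hρ.1.eigenvectorUnitary : Matrix n n ℂ)) = 1 := unitary_star_mul hρ.1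
  rw [hid]
  have hfirst : ∑ i, ∑ j, p i * Complex.normSq ((1 : Matrix n n ℂ) i j) * Real.log (p j)
      = ∑ i, ∑ j, c i j * (p i * Real.log (p i)) := by
    have l1 : ∀ i, ∑ j, p i * Complex.normSq ((1 : Matrix n n ℂ) i j) * Real.log (p j)
        = p i * Real.log (p i) := by
      intro i
      rw [Finset.sum_eq_single i]
      · simp [Matrix.one_apply]
      · intro j _ hj
        simp [Matrix.one_apply, Ne.symm hj]
      · simp
    have l2 : ∀ i, ∑ j, c i j * (p i * Real.log (p i)) = p i * Real.log (p i) := by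
      intro i
      rw [← Finset.sum_mul, normSq_row_sum hρ.1 hσ.1 i, one_mul]
    simp only [l1, l2]
  rw [hfirst]
  have hterm : ∀ i j, c i j * (p i - q j) ≤
      c i j * (p i * Real.log (p i)) - p i * c i j * Real.log (q j) := by
    intro i j
    have hp := hρ.eigenvalues_pos i
    have hq := hσ.eigenvalues_pos j
    have hlog := Real.log_le_sub_one_of_pos (div_pos hq hp)
    rw [Real.log_div hq.ne' hp.ne'] at hlog
    have h3 : p i * (Real.log (q j) - Real.log (p i)) ≤ p i * (q j / p i - 1) :=
      mul_le_mul_of_nonneg_left hlog hp.le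
    have h4 : p i * (q j / p i - 1) = q j - p i := by have : p i ≠ 0 := hp.ne'; field_simp
    have h5 : p i - q j ≤ p i * Real.log (p i) - p i * Real.log (q j) := by nlinarith
    have h6 := mul_le_mul_of_nonneg_left h5 (Complex.normSq_nonneg
      ((star (hρ.1.eigenvectorUnitary : Matrix n n ℂ) *
        (hσ.1.eigenvectorUnitary : Matrix n n ℂ)) i j))
    calc c i j * (p i - q j) ≤ c i j * (p i * Real.log (p i) - p i * Real.log (q j)) := h6
      _ = c i j * (p i * Real.log (p i)) - p i * c i j * Real.log (q j) := by ring
  have hzero : ∑ i, ∑ j, c i j * (p i - q j) = 0 := by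
    have expand : ∀ i, ∑ j, c i j * (p i - q j)
        = (∑ j, c i j) * p i - ∑ j, c i j * q j := by
      intro i
      rw [Finset.sum_mul]
      rw [← Finset.sum_sub_distrib]
      exact Finset.sum_congr rfl fun j _ => by ring
    simp only [expand]
    rw [Finset.sum_sub_distrib]
    have e1 : ∑ i, (∑ j, c i j) * p i = 1 := by
      have : ∀ i, (∑ j, c i j) * p i = p i := fun i => by
        rw [normSq_row_sum hρ.1 hσ.1 i, one_mul]
      simp only [this]
      exact sum_eigenvalues_eq_one hρ.1 h1
    have e2 : ∑ i, ∑ j, c i j * q j = 1 := by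
      rw [Finset.sum_comm]
      have : ∀ j, ∑ i, c i j * q j = q j := fun j => by
        rw [← Finset.sum_mul, normSq_col_sum hρ.1 hσ.1 j, one_mul]
      simp only [this]
      exact sum_eigenvalues_eq_one hσ.1 h2
    rw [e1, e2, sub_self]
  rw [sub_nonneg]
  calc ∑ i, ∑ j, p i * c i j * Real.log (q j)
      = ∑ i, ∑ j, (c i j * (p i * Real.log (p i)) - c i j * (p i - q j)) -
        (∑ i, ∑ j, (c i j * (p i * Real.log (p i)) - c i j * (p i - q j) -
          p i * c i j * Real.log (q j))) := by
        simp only [Finset.sum_sub_distrib]; ring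
    _ ≤ ∑ i, ∑ j, (c i j * (p i * Real.log (p i)) - c i j * (p i - q j)) := by
        have h0 : 0 ≤ ∑ i, ∑ j, (c i j * (p i * Real.log (p i)) - c i j * (p i - q j) -
            p i * c i j * Real.log (q j)) := by
          refine Finset.sum_nonneg fun i _ => Finset.sum_nonneg fun j _ => ?_
          have := hterm i j
          linarith
        linarith
    _ = ∑ i, ∑ j, c i j * (p i * Real.log (p i)) := by
        simp only [Finset.sum_sub_distrib]
        rw [hzero]; ring

end Helpers

set_option maxHeartbeats 1000000 in
/-- two-sided bound on the discrete heat functional of the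
interpolated trajectory. -/
theorem interpolated_Lambda_bounds {n : Type*} [Fintype n] [DecidableEq n]
    (ρk ρk1 : Matrix n n ℂ) (hk : IsDensity ρk) (hk1 : IsDensity ρk1)
    (hkpd : ρk.PosDef) (hk1pd : ρk1.PosDef)
    (m : ℕ) (hm : 1 ≤ m)
    (ρ' : ℕ → Matrix n n ℂ)
    (hρ' : ∀ ℓ, ρ' ℓ = (1 - (ℓ : ℝ) / m) • ρk + ((ℓ : ℝ) / m) • ρk1) :
    vnEntropy ρk1 - vnEntropy ρk - (relEnt ρk1 ρk + relEnt ρk ρk1) / m ≤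
        (∑ ℓ ∈ Finset.range m, ((ρ' ℓ - ρ' (ℓ + 1)) * matLog (ρ' (ℓ + 1))).trace.re) ∧
      (∑ ℓ ∈ Finset.range m, ((ρ' ℓ - ρ' (ℓ + 1)) * matLog (ρ' (ℓ + 1))).trace.re) ≤
        vnEntropy ρk1 - vnEntropy ρk := by
  have hm0 : (m : ℝ) ≠ 0 := Nat.cast_ne_zero.mpr (by omega)
  have hmpos : (0 : ℝ) < m := by positivity
  have hρ0 : ρ' 0 = ρk := by rw [hρ']; simp
  have hρm : ρ' m = ρk1 := by rw [hρ', div_self hm0]; simp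
  have hpd : ∀ ℓ, ℓ ≤ m → (ρ' ℓ).PosDef := by
    intro ℓ hl
    rw [hρ']
    exact myConvex_pd hkpd hk1pd (div_nonneg (Nat.cast_nonneg ℓ) hmpos.le)
      ((div_le_one hmpos).mpr (by exact_mod_cast hl))
  have htr : ∀ ℓ, ℓ ≤ m → (ρ' ℓ).trace = 1 := by
    intro ℓ hl
    rw [hρ', Matrix.trace_add, Matrix.trace_smul, Matrix.trace_smul, hk.2, hk1.2]
    rw [Complex.real_smul, Complex.real_smul]
    push_cast
    ring
  set E : ℕ → ℝ := fun ℓ => ((ρ' ℓ) * matLog (ρ' ℓ)).trace.re with hE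
  set R : ℝ := ∑ ℓ ∈ Finset.range m, relEnt (ρ' ℓ) (ρ' (ℓ + 1)) with hR
  have idT : ∀ ℓ, ((ρ' ℓ - ρ' (ℓ + 1)) * matLog (ρ' (ℓ + 1))).trace.re
      = (E ℓ - E (ℓ + 1)) - relEnt (ρ' ℓ) (ρ' (ℓ + 1)) := by
    intro ℓ
    simp only [hE, relEnt, Matrix.sub_mul, Matrix.trace_sub, Complex.sub_re]
    ring
  have sumT : (∑ ℓ ∈ Finset.range m, ((ρ' ℓ - ρ' (ℓ + 1)) * matLog (ρ' (ℓ + 1))).trace.re)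
      = (E 0 - E m) - R := by
    calc ∑ ℓ ∈ Finset.range m, ((ρ' ℓ - ρ' (ℓ + 1)) * matLog (ρ' (ℓ + 1))).trace.re
        = ∑ ℓ ∈ Finset.range m, ((E ℓ - E (ℓ + 1)) - relEnt (ρ' ℓ) (ρ' (ℓ + 1))) :=
          Finset.sum_congr rfl fun ℓ _ => idT ℓ
      _ = (∑ ℓ ∈ Finset.range m, (E ℓ - E (ℓ + 1))) -
          ∑ ℓ ∈ Finset.range m, relEnt (ρ' ℓ) (ρ' (ℓ + 1)) := Finset.sum_sub_distrib _ _
      _ = (E 0 - E m) - R := by rw [Finset.sum_range_sub' E m]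
  have hΔS : vnEntropy ρk1 - vnEntropy ρk = E 0 - E m := by
    simp only [vnEntropy, hE, hρ0, hρm]
    ring
  have hRnonneg : 0 ≤ R := by
    refine Finset.sum_nonneg fun ℓ hℓ => ?_
    have hℓm := Finset.mem_range.mp hℓ
    exact klein (hpd ℓ (by omega)) (hpd (ℓ + 1) (by omega)) (htr ℓ (by omega))
      (htr (ℓ + 1) (by omega))
  have swapid : ∀ a b : Matrix n n ℂ, relEnt a b + relEnt b a
      = ((a - b) * (matLog a - matLog b)).trace.re := by
    intro a b
    simp only [relEnt, Matrix.sub_mul, Matrix.mul_sub, Matrix.trace_sub, Complex.sub_re]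
    ring
  have hdiff : ∀ ℓ : ℕ, ρ' ℓ - ρ' (ℓ + 1) = ((m : ℝ)⁻¹) • (ρk - ρk1) := by
    intro ℓ
    rw [hρ' ℓ, hρ' (ℓ + 1)]
    ext i j
    simp only [Matrix.sub_apply, Matrix.add_apply, Matrix.smul_apply, Complex.real_smul]
    push_cast
    field_simp
    ring
  set f : ℕ → ℝ := fun ℓ => ((ρk - ρk1) * matLog (ρ' ℓ)).trace.re with hf
  have hRupper : R ≤ (relEnt ρk1 ρk + relEnt ρk ρk1) / m := by
    have step1 : R ≤ ∑ ℓ ∈ Finset.range m,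
        (relEnt (ρ' ℓ) (ρ' (ℓ + 1)) + relEnt (ρ' (ℓ + 1)) (ρ' ℓ)) := by
      refine Finset.sum_le_sum fun ℓ hℓ => ?_
      have hℓm := Finset.mem_range.mp hℓ
      exact le_add_of_nonneg_right (klein (hpd (ℓ + 1) (by omega)) (hpd ℓ (by omega))
        (htr (ℓ + 1) (by omega)) (htr ℓ (by omega)))
    have step2 : ∀ ℓ : ℕ, relEnt (ρ' ℓ) (ρ' (ℓ + 1)) + relEnt (ρ' (ℓ + 1)) (ρ' ℓ)
        = (m : ℝ)⁻¹ * (f ℓ - f (ℓ + 1)) := by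
      intro ℓ
      rw [swapid, hdiff ℓ, Matrix.smul_mul, Matrix.trace_smul]
      rw [Complex.real_smul]
      rw [Complex.mul_re]
      simp only [Complex.ofReal_re, Complex.ofReal_im, zero_mul, sub_zero]
      congr 1
      simp only [hf, Matrix.mul_sub, Matrix.trace_sub, Complex.sub_re]
    have step3 : ∑ ℓ ∈ Finset.range m,
        (relEnt (ρ' ℓ) (ρ' (ℓ + 1)) + relEnt (ρ' (ℓ + 1)) (ρ' ℓ))
        = (m : ℝ)⁻¹ * (f 0 - f m) := by
      simp only [step2]
      rw [← Finset.mul_sum, Finset.sum_range_sub' f m]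
    have step4 : f 0 - f m = relEnt ρk ρk1 + relEnt ρk1 ρk := by
      rw [swapid ρk ρk1]
      simp only [hf, hρ0, hρm, Matrix.mul_sub, Matrix.trace_sub, Complex.sub_re]
    calc R ≤ (m : ℝ)⁻¹ * (f 0 - f m) := by rw [← step3]; exact step1
      _ = (relEnt ρk1 ρk + relEnt ρk ρk1) / m := by rw [step4]; field_simp; ring
  constructor
  · rw [sumT, ← hΔS]
    linarith
  · rw [sumT, ← hΔS]
    linarith
end

section
/- Consider a discrete cycle through configurations c₁ = (ρ₁, H₁) thermal at β₁, c₃ = (Vρ₁V†, H₂), c₂ = (ρ₂, H₂) thermal at β₂, c₄ = (Wρ₂W†, H₁), returning to c₁ via a DTT, with unitaries V, W. Then the heats Q₂ := tr[(ρ₂ − Vρ₁V†)H₂] and Q₁ := tr[(ρ₁ − Wρ₂W†)H₁] satisfy β₂Q₂ + β₁Q₁ ≤ 0. -/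
open Matrix BigOperators ComplexOrder

section Aux

open Polynomial

variable {n : Type*} [Fintype n] [DecidableEq n]

lemma aeval_diagonal' (q : ℂ[X]) (d : n → ℂ) :
    Polynomial.aeval (Matrix.diagonal d) q = Matrix.diagonal (fun i => q.eval (d i)) := by
  have h := Polynomial.aeval_algHom_apply (Matrix.diagonalAlgHom (n := n) ℂ) d q
  simp only [Matrix.diagonalAlgHom_apply] at h
  rw [h]
  have : (aeval d) q = fun i => eval (d i) q := by
    funext i
    rw [Polynomial.aeval_fn_apply, Polynomial.coe_aeval_eq_eval]
  rw [this]

lemma aeval_unitary_conj (U : Matrix.unitaryGroup n ℂ) (A : Matrix n n ℂ) (q : ℂ[X]) :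
    Polynomial.aeval ((U : Matrix n n ℂ) * A * star (U : Matrix n n ℂ)) q
      = (U : Matrix n n ℂ) * Polynomial.aeval A q * star (U : Matrix n n ℂ) := by
  have hU : (U : Matrix n n ℂ) * star (U : Matrix n n ℂ) = 1 := U.2.2
  induction q using Polynomial.induction_on' with
  | add p q hp hq => simp [map_add, hp, hq, Matrix.mul_add, Matrix.add_mul]
  | monomial k c =>
    simp only [Polynomial.aeval_monomial]
    have : ((U : Matrix n n ℂ) * A * star (U : Matrix n n ℂ)) ^ k
        = (U : Matrix n n ℂ) * A ^ k * star (U : Matrix n n ℂ) := by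
      induction k with
      | zero => simp [hU]
      | succ m ih =>
        rw [pow_succ, ih, pow_succ]
        calc (U : Matrix n n ℂ) * A ^ m * star (U : Matrix n n ℂ) * ((U : Matrix n n ℂ) * A * star (U : Matrix n n ℂ))
            = (U : Matrix n n ℂ) * A ^ m * ((star (U : Matrix n n ℂ) * (U : Matrix n n ℂ)) * A) * star (U : Matrix n n ℂ) := by
              noncomm_ring
          _ = _ := by rw [U.2.1]; noncomm_ring
    rw [this]
    simp [Algebra.algebraMap_eq_smul_one, Matrix.mul_smul, Matrix.smul_mul, hU]

lemma conj_diag_eq_aeval (q : ℂ[X]) (V : Matrix.unitaryGroup n ℂ) (g : n → ℝ) (f : ℝ → ℝ)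
    (hf : ∀ i, q.eval ((g i : ℝ) : ℂ) = ((f (g i) : ℝ) : ℂ)) :
    (V : Matrix n n ℂ) * Matrix.diagonal (fun i => (f (g i) : ℂ)) * star (V : Matrix n n ℂ)
      = Polynomial.aeval ((V : Matrix n n ℂ) * Matrix.diagonal (fun i => ((g i : ℝ) : ℂ)) * star (V : Matrix n n ℂ)) q := by
  rw [aeval_unitary_conj, aeval_diagonal']
  rw [show (fun i => ((f (g i) : ℝ) : ℂ)) = fun i => q.eval ((g i : ℝ) : ℂ) from funext fun i => (hf i).symm]

/-- `matFun` is independent of the chosen unitary diagonalization. -/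
lemma matFun_decomp (f : ℝ → ℝ) (U : Matrix.unitaryGroup n ℂ) (d : n → ℝ) :
    matFun f ((U : Matrix n n ℂ) * Matrix.diagonal (fun i => ((d i : ℝ) : ℂ)) * star (U : Matrix n n ℂ)) =
      (U : Matrix n n ℂ) * Matrix.diagonal (fun i => ((f (d i) : ℝ) : ℂ)) * star (U : Matrix n n ℂ) := by
  set A := (U : Matrix n n ℂ) * Matrix.diagonal (fun i => ((d i : ℝ) : ℂ)) * star (U : Matrix n n ℂ) with hAdef
  have hA : A.IsHermitian := by
    have hstar : (star fun i => ((d i : ℝ) : ℂ)) = (fun i => ((d i : ℝ) : ℂ)) :=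
      funext fun i => by simp
    unfold Matrix.IsHermitian
    simp only [hAdef, Matrix.star_eq_conjTranspose, Matrix.conjTranspose_mul,
      Matrix.conjTranspose_conjTranspose, Matrix.diagonal_conjTranspose, hstar, Matrix.mul_assoc]
  classical
  set s : Finset ℝ := (Finset.image d Finset.univ) ∪ (Finset.image hA.eigenvalues Finset.univ) with hs
  set p : ℝ[X] := Lagrange.interpolate s id f with hp
  set q : ℂ[X] := p.map (algebraMap ℝ ℂ) with hq
  have hev : ∀ x ∈ s, q.eval ((x : ℝ) : ℂ) = ((f x : ℝ) : ℂ) := by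
    intro x hx
    rw [hq, Polynomial.eval_map, show ((x : ℂ)) = algebraMap ℝ ℂ x from rfl,
      Polynomial.eval₂_at_apply]
    have h := Lagrange.eval_interpolate_at_node f (Set.injOn_id (s : Set ℝ)) hx
    simp only [id] at h
    rw [hp, h]
    rfl
  have h₁ : matFun f A = (hA.eigenvectorUnitary : Matrix n n ℂ) *
      Matrix.diagonal (fun i => (f (hA.eigenvalues i) : ℂ)) * star (hA.eigenvectorUnitary : Matrix n n ℂ) := by
    rw [matFun, dif_pos hA]
  have hspec : A = (hA.eigenvectorUnitary : Matrix n n ℂ) *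
      Matrix.diagonal (fun i => ((hA.eigenvalues i : ℝ) : ℂ)) * star (hA.eigenvectorUnitary : Matrix n n ℂ) := by
    have := hA.spectral_theorem
    rw [Unitary.conjStarAlgAut_apply] at this
    exact this
  have h₂ := conj_diag_eq_aeval q hA.eigenvectorUnitary hA.eigenvalues f
    (fun i => hev _ (Finset.mem_union_right _ (Finset.mem_image_of_mem _ (Finset.mem_univ i))))
  have h₃ := conj_diag_eq_aeval q U d f
    (fun i => hev _ (Finset.mem_union_left _ (Finset.mem_image_of_mem _ (Finset.mem_univ i))))
  rw [h₁, h₂, ← hspec, h₃, ← hAdef]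

/-- Spectral theorem with plain real coercions. -/
lemma herm_spec {A : Matrix n n ℂ} (hA : A.IsHermitian) :
    A = (hA.eigenvectorUnitary : Matrix n n ℂ) *
      Matrix.diagonal (fun i => ((hA.eigenvalues i : ℝ) : ℂ)) *
      star (hA.eigenvectorUnitary : Matrix n n ℂ) := by
  have := hA.spectral_theorem
  rw [Unitary.conjStarAlgAut_apply] at this
  exact this

lemma matFun_conj_s15 (f : ℝ → ℝ) {A : Matrix n n ℂ} (hA : A.IsHermitian)
    (V : Matrix.unitaryGroup n ℂ) :
    matFun f ((V : Matrix n n ℂ) * A * star (V : Matrix n n ℂ))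
      = (V : Matrix n n ℂ) * matFun f A * star (V : Matrix n n ℂ) := by
  set U := hA.eigenvectorUnitary with hU
  have h1 : (V : Matrix n n ℂ) * A * star (V : Matrix n n ℂ)
      = ((V * U : Matrix.unitaryGroup n ℂ) : Matrix n n ℂ) *
        Matrix.diagonal (fun i => ((hA.eigenvalues i : ℝ) : ℂ)) *
        star ((V * U : Matrix.unitaryGroup n ℂ) : Matrix n n ℂ) := by
    conv_lhs => rw [herm_spec hA]
    show _ = ((V : Matrix n n ℂ) * (U : Matrix n n ℂ)) * _ * star ((V : Matrix n n ℂ) * (U : Matrix n n ℂ))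
    rw [Matrix.star_mul]
    noncomm_ring
  have h2 : matFun f A = (U : Matrix n n ℂ) *
      Matrix.diagonal (fun i => ((f (hA.eigenvalues i) : ℝ) : ℂ)) * star (U : Matrix n n ℂ) := by
    rw [matFun, dif_pos hA]
  rw [h1, matFun_decomp, h2]
  show ((V : Matrix n n ℂ) * (U : Matrix n n ℂ)) * _ * star ((V : Matrix n n ℂ) * (U : Matrix n n ℂ)) = _
  rw [Matrix.star_mul]
  noncomm_ring

/-- Structure of the Gibbs state. -/
lemma gibbs_struct [Nonempty n] (β : ℝ) (H : Matrix n n ℂ) (hH : H.IsHermitian) :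
    ∃ (U : Matrix.unitaryGroup n ℂ) (q : n → ℝ) (c : ℝ),
      (∀ i, 0 < q i) ∧ (∑ i, q i = 1) ∧
      gibbs β H = (U : Matrix n n ℂ) * Matrix.diagonal (fun i => ((q i : ℝ) : ℂ)) *
        star (U : Matrix n n ℂ) ∧
      matLog (gibbs β H) = (-β) • H - (c : ℂ) • 1 := by
  have hs : ((-β) • H).IsHermitian := by
    unfold Matrix.IsHermitian at *
    rw [Matrix.conjTranspose_smul_non_comm, hH]
    · simp
    · intros; simp [mul_comm]
  set U := hs.eigenvectorUnitary with hUdef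
  set μ := hs.eigenvalues with hμdef
  set z : ℝ := ∑ i, Real.exp (μ i) with hzdef
  have hz : 0 < z := Finset.sum_pos (fun i _ => Real.exp_pos _) Finset.univ_nonempty
  have hspec := herm_spec hs
  have hExp : matExp ((-β) • H) = (U : Matrix n n ℂ) *
      Matrix.diagonal (fun i => ((Real.exp (μ i) : ℝ) : ℂ)) * star (U : Matrix n n ℂ) := by
    rw [matExp]
    conv_lhs => rw [hspec]
    exact matFun_decomp Real.exp U μ
  have htr : (matExp ((-β) • H)).trace = (z : ℂ) := by
    rw [hExp, Matrix.trace_mul_cycle, U.2.1, one_mul, Matrix.trace_diagonal, hzdef,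
      Complex.ofReal_sum]
  have hone : (U : Matrix n n ℂ) * star (U : Matrix n n ℂ) = 1 := U.2.2
  have hrepr : gibbs β H = (U : Matrix n n ℂ) *
      Matrix.diagonal (fun i => ((Real.exp (μ i) / z : ℝ) : ℂ)) * star (U : Matrix n n ℂ) := by
    rw [gibbs, htr, hExp, ← Matrix.smul_mul, ← Matrix.mul_smul, ← Matrix.diagonal_smul,
      show (((z : ℂ))⁻¹ • fun i => ((Real.exp (μ i) : ℝ) : ℂ))
          = (fun i => ((Real.exp (μ i) / z : ℝ) : ℂ)) from funext fun i => by
        show ((z : ℂ))⁻¹ * ((Real.exp (μ i) : ℝ) : ℂ) = ((Real.exp (μ i) / z : ℝ) : ℂ)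
        rw [Complex.ofReal_div, div_eq_inv_mul]]
  refine ⟨U, fun i => Real.exp (μ i) / z, Real.log z,
    fun i => div_pos (Real.exp_pos _) hz, ?_, hrepr, ?_⟩
  · rw [← Finset.sum_div, ← hzdef, div_self (ne_of_gt hz)]
  · rw [matLog]
    conv_lhs => rw [hrepr]
    rw [matFun_decomp]
    have hlog : ∀ i, Real.log (Real.exp (μ i) / z) = μ i - Real.log z := by
      intro i
      rw [Real.log_div (Real.exp_ne_zero _) (ne_of_gt hz), Real.log_exp]
    have hdiag : Matrix.diagonal (fun i => ((Real.log (Real.exp (μ i) / z) : ℝ) : ℂ))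
        = Matrix.diagonal (fun i => ((μ i : ℝ) : ℂ)) - (Real.log z : ℂ) • 1 := by
      ext i j
      rcases eq_or_ne i j with h | h
      · subst h
        simp only [Matrix.diagonal_apply_eq, Matrix.sub_apply, Matrix.smul_apply,
          Matrix.one_apply_eq, smul_eq_mul, mul_one]
        rw [hlog i]
        push_cast
        ring
      · simp [Matrix.diagonal_apply_ne _ h, Matrix.one_apply_ne h]
    rw [hdiag, Matrix.mul_sub, Matrix.sub_mul, ← hspec]
    congr 1
    rw [Matrix.mul_smul, Matrix.smul_mul, mul_one, hone]

/-- trace of a product of two unitarily-diagonalized Hermitian matrices. -/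
lemma trace_conj_conj (U V : Matrix.unitaryGroup n ℂ) (a b : n → ℝ) :
    ((((U : Matrix n n ℂ) * Matrix.diagonal (fun i => ((a i : ℝ) : ℂ)) * star (U : Matrix n n ℂ)) *
      ((V : Matrix n n ℂ) * Matrix.diagonal (fun i => ((b i : ℝ) : ℂ)) * star (V : Matrix n n ℂ))).trace).re
    = ∑ i, ∑ j, a i * b j *
        Complex.normSq ((star (U : Matrix n n ℂ) * (V : Matrix n n ℂ)) i j) := by
  set M : Matrix n n ℂ := star (U : Matrix n n ℂ) * (V : Matrix n n ℂ) with hM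
  have hstarM : star M = star (V : Matrix n n ℂ) * (U : Matrix n n ℂ) := by
    rw [hM, Matrix.star_mul, star_star]
  set A : Matrix n n ℂ := Matrix.diagonal (fun i => ((a i : ℝ) : ℂ)) with hA
  set B : Matrix n n ℂ := Matrix.diagonal (fun i => ((b i : ℝ) : ℂ)) with hB
  have key : ((U : Matrix n n ℂ) * A * star (U : Matrix n n ℂ)) *
      ((V : Matrix n n ℂ) * B * star (V : Matrix n n ℂ))
      = (U : Matrix n n ℂ) * (A * M * B * star M) * star (U : Matrix n n ℂ) := by
    rw [hM, hstarM]
    simp only [Matrix.mul_assoc]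
    rw [U.2.2, mul_one]
  have htr : (((U : Matrix n n ℂ) * A * star (U : Matrix n n ℂ)) *
      ((V : Matrix n n ℂ) * B * star (V : Matrix n n ℂ))).trace = (A * M * B * star M).trace := by
    rw [key, Matrix.trace_mul_cycle, U.2.1, one_mul]
  rw [htr]
  have hdiag : ∀ i, (A * M * B * star M) i i
      = ∑ j, ((a i * b j * Complex.normSq (M i j) : ℝ) : ℂ) := by
    intro i
    have h1 : (A * M * B * star M) i i = ∑ j, (A * M * B) i j * (star M) j i := by
      rw [Matrix.mul_apply]
    rw [h1]
    congr 1
    funext j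
    have h2 : (A * M * B) i j = ((a i : ℂ)) * M i j * ((b j : ℂ)) := by
      rw [hB, Matrix.mul_diagonal, hA, Matrix.diagonal_mul]
    have h3 : (star M) j i = (starRingEnd ℂ) (M i j) := by
      rw [Matrix.star_eq_conjTranspose, Matrix.conjTranspose_apply]
      rfl
    rw [h2, h3]
    rw [show ((a i : ℂ)) * M i j * ((b j : ℂ)) * (starRingEnd ℂ) (M i j)
        = ((a i : ℂ)) * ((b j : ℂ)) * (M i j * (starRingEnd ℂ) (M i j)) by ring,
      Complex.mul_conj]
    push_cast
    ring
  have : (A * M * B * star M).trace = ∑ i, ∑ j, ((a i * b j * Complex.normSq (M i j) : ℝ) : ℂ) := by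
    rw [Matrix.trace]
    exact Finset.sum_congr rfl fun i _ => hdiag i
  rw [this]
  push_cast
  simp

/-- Klein's inequality, trace form. -/
lemma klein_trace (σ : Matrix n n ℂ) (hσp : σ.PosSemidef) (hσt : σ.trace = 1)
    (V : Matrix.unitaryGroup n ℂ) (q : n → ℝ) (hq : ∀ i, 0 < q i) (hqs : ∑ i, q i = 1) :
    ((σ * matLog ((V : Matrix n n ℂ) * Matrix.diagonal (fun i => ((q i : ℝ) : ℂ)) *
        star (V : Matrix n n ℂ))).trace).re ≤ ((σ * matLog σ).trace).re := by
  have hσH : σ.IsHermitian := hσp.1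
  set U := hσH.eigenvectorUnitary with hUdef
  set p := hσH.eigenvalues with hpdef
  have hp0 : ∀ i, 0 ≤ p i := fun i => hσp.eigenvalues_nonneg i
  have hspecσ := herm_spec hσH
  have hps : ∑ i, p i = 1 := by
    have h1 : σ.trace = ((∑ i, p i : ℝ) : ℂ) := by
      conv_lhs => rw [hspecσ]
      rw [Matrix.trace_mul_cycle, U.2.1, one_mul, Matrix.trace_diagonal]
      push_cast
      rfl
    rw [hσt] at h1
    exact_mod_cast h1.symm
  have hLσ : matLog σ = (U : Matrix n n ℂ) *
      Matrix.diagonal (fun i => ((Real.log (p i) : ℝ) : ℂ)) * star (U : Matrix n n ℂ) := by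
    rw [matLog]
    conv_lhs => rw [hspecσ]
    exact matFun_decomp Real.log U p
  have hLρ : matLog ((V : Matrix n n ℂ) * Matrix.diagonal (fun i => ((q i : ℝ) : ℂ)) *
      star (V : Matrix n n ℂ)) = (V : Matrix n n ℂ) *
      Matrix.diagonal (fun i => ((Real.log (q i) : ℝ) : ℂ)) * star (V : Matrix n n ℂ) := by
    rw [matLog]
    exact matFun_decomp Real.log V q
  set M : Matrix n n ℂ := star (U : Matrix n n ℂ) * (V : Matrix n n ℂ) with hMdef
  set w : n → n → ℝ := fun i j => Complex.normSq (M i j) with hwdef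
  have hw0 : ∀ i j, 0 ≤ w i j := fun i j => Complex.normSq_nonneg _
  -- LHS computation
  have hLHS : ((σ * matLog ((V : Matrix n n ℂ) * Matrix.diagonal (fun i => ((q i : ℝ) : ℂ)) *
      star (V : Matrix n n ℂ))).trace).re = ∑ i, ∑ j, p i * Real.log (q j) * w i j := by
    rw [hLρ]
    conv_lhs => rw [hspecσ]
    exact trace_conj_conj U V p (fun j => Real.log (q j))
  -- RHS computation
  have hRHS : ((σ * matLog σ).trace).re = ∑ i, p i * Real.log (p i) := by
    have hcollapse : ∑ i, ∑ j, p i * Real.log (p j) * Complex.normSq ((1 : Matrix n n ℂ) i j)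
        = ∑ i, p i * Real.log (p i) := by
      refine Finset.sum_congr rfl fun i _ => ?_
      rw [Finset.sum_eq_single i]
      · simp
      · intro j _ hj
        simp [Matrix.one_apply_ne (Ne.symm hj)]
      · intro hi
        exact absurd (Finset.mem_univ i) hi
    rw [hLσ]
    conv_lhs => rw [hspecσ]
    rw [trace_conj_conj U U p (fun j => Real.log (p j)),
      show star (U : Matrix n n ℂ) * (U : Matrix n n ℂ) = 1 from U.2.1, hcollapse]
  -- row and column sums of w
  have hMMstar : M * star M = 1 := by
    rw [hMdef, Matrix.star_mul, star_star]
    calc star (U : Matrix n n ℂ) * (V : Matrix n n ℂ) * (star (V : Matrix n n ℂ) * (U : Matrix n n ℂ))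
        = star (U : Matrix n n ℂ) * ((V : Matrix n n ℂ) * star (V : Matrix n n ℂ)) * (U : Matrix n n ℂ) := by
          noncomm_ring
      _ = 1 := by rw [V.2.2, mul_one, U.2.1]
  have hstarMM : star M * M = 1 := by
    rw [hMdef, Matrix.star_mul, star_star]
    calc star (V : Matrix n n ℂ) * (U : Matrix n n ℂ) * (star (U : Matrix n n ℂ) * (V : Matrix n n ℂ))
        = star (V : Matrix n n ℂ) * ((U : Matrix n n ℂ) * star (U : Matrix n n ℂ)) * (V : Matrix n n ℂ) := by
          noncomm_ring
      _ = 1 := by rw [U.2.2, mul_one, V.2.1]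
  have hrow : ∀ i, ∑ j, w i j = 1 := by
    intro i
    have h1 : (M * star M) i i = ∑ j, M i j * (starRingEnd ℂ) (M i j) := by
      rw [Matrix.mul_apply]
      exact Finset.sum_congr rfl fun j _ => by
        rw [Matrix.star_eq_conjTranspose, Matrix.conjTranspose_apply]; rfl
    rw [hMMstar] at h1
    have h2 : ((1 : Matrix n n ℂ) i i) = ∑ j, ((w i j : ℝ) : ℂ) := by
      rw [h1]
      exact Finset.sum_congr rfl fun j _ => by rw [Complex.mul_conj, hwdef]
    have h3 := congrArg Complex.re h2
    simp only [Matrix.one_apply_eq, Complex.one_re] at h3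
    rw [h3]
    push_cast
    simp
  have hcol : ∀ j, ∑ i, w i j = 1 := by
    intro j
    have h1 : (star M * M) j j = ∑ i, (starRingEnd ℂ) (M i j) * M i j := by
      rw [Matrix.mul_apply]
      exact Finset.sum_congr rfl fun i _ => by
        rw [Matrix.star_eq_conjTranspose, Matrix.conjTranspose_apply]; rfl
    rw [hstarMM] at h1
    have h2 : ((1 : Matrix n n ℂ) j j) = ∑ i, ((w i j : ℝ) : ℂ) := by
      rw [h1]
      exact Finset.sum_congr rfl fun i _ => by
        rw [mul_comm, Complex.mul_conj, hwdef]
    have h3 := congrArg Complex.re h2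
    simp only [Matrix.one_apply_eq, Complex.one_re] at h3
    rw [h3]
    push_cast
    simp
  -- scalar Klein inequality
  have hscalar : ∀ i j, p i - q j ≤ p i * Real.log (p i) - p i * Real.log (q j) := by
    intro i j
    rcases eq_or_lt_of_le (hp0 i) with h | h
    · rw [← h]
      simp [le_of_lt (hq j)]
    · have hlog := Real.log_le_sub_one_of_pos (div_pos (hq j) h)
      rw [Real.log_div (ne_of_gt (hq j)) (ne_of_gt h)] at hlog
      have := mul_le_mul_of_nonneg_left hlog (le_of_lt h)
      have hne : p i ≠ 0 := ne_of_gt h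
      field_simp at this ⊢
      nlinarith
  -- combine
  have hsum0 : ∑ i, ∑ j, w i j * (p i - q j) = 0 := by
    have h1 : ∑ i, ∑ j, w i j * (p i - q j)
        = ∑ i, ∑ j, w i j * p i - ∑ i, ∑ j, w i j * q j := by
      simp only [mul_sub, Finset.sum_sub_distrib]
    have h2 : ∑ i, ∑ j, w i j * p i = 1 := by
      have : ∀ i, ∑ j, w i j * p i = p i := by
        intro i; rw [← Finset.sum_mul, hrow i, one_mul]
      rw [Finset.sum_congr rfl fun i _ => this i, hps]
    have h3 : ∑ i, ∑ j, w i j * q j = 1 := by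
      rw [Finset.sum_comm]
      have : ∀ j, ∑ i, w i j * q j = q j := by
        intro j; rw [← Finset.sum_mul, hcol j, one_mul]
      rw [Finset.sum_congr rfl fun j _ => this j, hqs]
    rw [h1, h2, h3, sub_self]
  have hmain : ∑ i, ∑ j, w i j * (p i - q j)
      ≤ ∑ i, ∑ j, w i j * (p i * Real.log (p i) - p i * Real.log (q j)) := by
    refine Finset.sum_le_sum fun i _ => Finset.sum_le_sum fun j _ => ?_
    exact mul_le_mul_of_nonneg_left (hscalar i j) (hw0 i j)
  rw [hsum0] at hmain
  have hsplit : ∑ i, ∑ j, w i j * (p i * Real.log (p i) - p i * Real.log (q j))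
      = ∑ i, p i * Real.log (p i) - ∑ i, ∑ j, p i * Real.log (q j) * w i j := by
    have h1 : ∀ i, ∑ j, w i j * (p i * Real.log (p i) - p i * Real.log (q j))
        = p i * Real.log (p i) - ∑ j, p i * Real.log (q j) * w i j := by
      intro i
      simp only [mul_sub, Finset.sum_sub_distrib]
      rw [← Finset.sum_mul, hrow i, one_mul]
      congr 1
      exact Finset.sum_congr rfl fun j _ => by ring
    rw [Finset.sum_congr rfl fun i _ => h1 i, Finset.sum_sub_distrib]
  rw [hsplit] at hmain
  rw [hLHS, hRHS]
  linarith

lemma heat_formula (β c : ℝ) (H ρ σ : Matrix n n ℂ) (hρt : ρ.trace = 1) (hσt : σ.trace = 1)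
    (hlog : matLog ρ = (-β) • H - (c : ℂ) • 1) :
    β * (((ρ - σ) * H).trace.re) = ((σ * matLog ρ).trace).re - ((ρ * matLog ρ).trace).re := by
  have h1 : (ρ - σ) * matLog ρ = (-β) • ((ρ - σ) * H) - (c : ℂ) • (ρ - σ) := by
    rw [hlog, Matrix.mul_sub, mul_smul_comm, mul_smul_comm, mul_one]
  have h2 : ((ρ - σ) * matLog ρ).trace = (-β) • ((ρ - σ) * H).trace := by
    rw [h1, Matrix.trace_sub, Matrix.trace_smul, Matrix.trace_smul, Matrix.trace_sub, hρt, hσt]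
    simp
  have h3 : ((ρ - σ) * matLog ρ).trace = (ρ * matLog ρ).trace - (σ * matLog ρ).trace := by
    rw [Matrix.sub_mul, Matrix.trace_sub]
  rw [h3] at h2
  have h4 := congrArg Complex.re h2
  simp only [Complex.sub_re] at h4
  have h5 : ((-β) • ((ρ - σ) * H).trace).re = -β * ((ρ - σ) * H).trace.re := by simp
  rw [h5] at h4
  linarith

lemma conj_trace_eq (ρ : Matrix n n ℂ) (V : Matrix.unitaryGroup n ℂ) :
    ((V : Matrix n n ℂ) * ρ * star (V : Matrix n n ℂ)).trace = ρ.trace := by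
  rw [Matrix.trace_mul_cycle, V.2.1, one_mul]

lemma conj_psd (ρ : Matrix n n ℂ) (hρ : ρ.PosSemidef) (V : Matrix.unitaryGroup n ℂ) :
    ((V : Matrix n n ℂ) * ρ * star (V : Matrix n n ℂ)).PosSemidef := by
  rw [Matrix.star_eq_conjTranspose]
  exact hρ.mul_mul_conjTranspose_same _

lemma conj_entropy_trace (ρ : Matrix n n ℂ) (hρ : ρ.IsHermitian) (V : Matrix.unitaryGroup n ℂ) :
    ((((V : Matrix n n ℂ) * ρ * star (V : Matrix n n ℂ)) *
      matLog ((V : Matrix n n ℂ) * ρ * star (V : Matrix n n ℂ))).trace)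
      = ((ρ * matLog ρ).trace) := by
  have hlog : matLog ((V : Matrix n n ℂ) * ρ * star (V : Matrix n n ℂ))
      = (V : Matrix n n ℂ) * matLog ρ * star (V : Matrix n n ℂ) :=
    matFun_conj_s15 Real.log hρ V
  rw [hlog]
  have h0 : star (V : Matrix n n ℂ) * ((V : Matrix n n ℂ) * (matLog ρ * star (V : Matrix n n ℂ)))
      = matLog ρ * star (V : Matrix n n ℂ) := by
    rw [← Matrix.mul_assoc, V.2.1, one_mul]
  have hprod : ((V : Matrix n n ℂ) * ρ * star (V : Matrix n n ℂ)) *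
      ((V : Matrix n n ℂ) * matLog ρ * star (V : Matrix n n ℂ))
      = (V : Matrix n n ℂ) * (ρ * matLog ρ) * star (V : Matrix n n ℂ) := by
    simp only [Matrix.mul_assoc]
    rw [h0]
  rw [hprod, Matrix.trace_mul_cycle, V.2.1, one_mul]

end Aux

/-- loop inequality for the discrete cycle: β₂Q₂ + β₁Q₁ ≤ 0. -/
theorem cycle_loop_inequality {n : Type*} [Fintype n] [DecidableEq n]
    (H₁ H₂ : Matrix n n ℂ) (hH₁ : H₁.IsHermitian) (hH₂ : H₂.IsHermitian)
    (β₁ β₂ : ℝ) (hβ₁ : 0 < β₁) (hβ₂ : 0 < β₂)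
    (ρ₁ ρ₂ : Matrix n n ℂ) (hρ₁ : ρ₁ = gibbs β₁ H₁) (hρ₂ : ρ₂ = gibbs β₂ H₂)
    (V W : Matrix.unitaryGroup n ℂ) :
    β₂ * (((ρ₂ - (V : Matrix n n ℂ) * ρ₁ * star (V : Matrix n n ℂ)) * H₂).trace.re) +
      β₁ * (((ρ₁ - (W : Matrix n n ℂ) * ρ₂ * star (W : Matrix n n ℂ)) * H₁).trace.re) ≤ 0 := by
  cases isEmpty_or_nonempty n with
  | inl h =>
    have htr0 : ∀ A : Matrix n n ℂ, A.trace = 0 := fun A => by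
      simp [Matrix.trace]
    simp [htr0]
  | inr h =>
    obtain ⟨U₁, q₁, c₁, hq₁pos, hq₁sum, hrep₁, hlog₁⟩ := gibbs_struct β₁ H₁ hH₁
    obtain ⟨U₂, q₂, c₂, hq₂pos, hq₂sum, hrep₂, hlog₂⟩ := gibbs_struct β₂ H₂ hH₂
    rw [← hρ₁] at hrep₁ hlog₁
    rw [← hρ₂] at hrep₂ hlog₂
    have hdiagpsd : ∀ (q : n → ℝ), (∀ i, 0 < q i) →
        (Matrix.diagonal (fun i => ((q i : ℝ) : ℂ))).PosSemidef := by
      intro q hq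
      refine Matrix.posSemidef_diagonal_iff.2 fun i => ?_
      exact_mod_cast le_of_lt (hq i)
    have hρ₁psd : ρ₁.PosSemidef := by
      rw [hrep₁]; exact conj_psd _ (hdiagpsd q₁ hq₁pos) U₁
    have hρ₂psd : ρ₂.PosSemidef := by
      rw [hrep₂]; exact conj_psd _ (hdiagpsd q₂ hq₂pos) U₂
    have hρ₁tr : ρ₁.trace = 1 := by
      rw [hrep₁, conj_trace_eq, Matrix.trace_diagonal]
      exact_mod_cast hq₁sum
    have hρ₂tr : ρ₂.trace = 1 := by
      rw [hrep₂, conj_trace_eq, Matrix.trace_diagonal]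
      exact_mod_cast hq₂sum
    have hσ₂psd : ((V : Matrix n n ℂ) * ρ₁ * star (V : Matrix n n ℂ)).PosSemidef :=
      conj_psd _ hρ₁psd V
    have hσ₁psd : ((W : Matrix n n ℂ) * ρ₂ * star (W : Matrix n n ℂ)).PosSemidef :=
      conj_psd _ hρ₂psd W
    have hσ₂tr : ((V : Matrix n n ℂ) * ρ₁ * star (V : Matrix n n ℂ)).trace = 1 :=
      (conj_trace_eq ρ₁ V).trans hρ₁tr
    have hσ₁tr : ((W : Matrix n n ℂ) * ρ₂ * star (W : Matrix n n ℂ)).trace = 1 :=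
      (conj_trace_eq ρ₂ W).trans hρ₂tr
    have heat₂ := heat_formula β₂ c₂ H₂ ρ₂ ((V : Matrix n n ℂ) * ρ₁ * star (V : Matrix n n ℂ))
      hρ₂tr hσ₂tr hlog₂
    have heat₁ := heat_formula β₁ c₁ H₁ ρ₁ ((W : Matrix n n ℂ) * ρ₂ * star (W : Matrix n n ℂ))
      hρ₁tr hσ₁tr hlog₁
    have ent₁ := conj_entropy_trace ρ₁ hρ₁psd.1 V
    have ent₂ := conj_entropy_trace ρ₂ hρ₂psd.1 W
    have klein₂ : ((((V : Matrix n n ℂ) * ρ₁ * star (V : Matrix n n ℂ)) * matLog ρ₂).trace).re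
        ≤ ((((V : Matrix n n ℂ) * ρ₁ * star (V : Matrix n n ℂ)) *
            matLog ((V : Matrix n n ℂ) * ρ₁ * star (V : Matrix n n ℂ))).trace).re := by
      have hk := klein_trace _ hσ₂psd hσ₂tr U₂ q₂ hq₂pos hq₂sum
      rw [← hrep₂] at hk
      exact hk
    have klein₁ : ((((W : Matrix n n ℂ) * ρ₂ * star (W : Matrix n n ℂ)) * matLog ρ₁).trace).re
        ≤ ((((W : Matrix n n ℂ) * ρ₂ * star (W : Matrix n n ℂ)) *
            matLog ((W : Matrix n n ℂ) * ρ₂ * star (W : Matrix n n ℂ))).trace).re := by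
      have hk := klein_trace _ hσ₁psd hσ₁tr U₁ q₁ hq₁pos hq₁sum
      rw [← hrep₁] at hk
      exact hk
    have e₁ := congrArg Complex.re ent₁
    have e₂ := congrArg Complex.re ent₂
    rw [heat₂, heat₁]
    linarith
end
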